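/- arXiv:1501.02496 — 8 statements merged into one kernel-verified Lean document; each statement's English description precedes it below -/
import Mathlib

section
/- Let Γ be a simplicial complex with a sequence of facets F_1, ..., F_i forming a well ordered facet cover. Then under the total order F_1 < F_2 < ... < F_i < (all other facets of Γ in any fixed order), the set {F_1, ..., F_i} is a facet (maximal rooted face) of the Lyubeznik simplicial complex Λ associated to the facet ideal of Γ and this order. -/
open Classical

variable {α : Type*} [DecidableEq α]

/-- The vertex set of a simplicial complex given by its finset of facets. -/
def vertexSet (Δ : Finset (Finset α)) : Finset α := Δ.sup id

/-- `D` is a facet cover of the complex with facet set `Δ` and vertex set `V`: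
every vertex belongs to some facet of `D`. -/
def IsFacetCover (V : Finset α) (Δ D : Finset (Finset α)) : Prop :=
  D ⊆ Δ ∧ ∀ v ∈ V, ∃ F ∈ D, v ∈ F

/-- A minimal facet cover: no proper subset is a facet cover. -/
def IsMinimalFacetCover (V : Finset α) (Δ D : Finset (Finset α)) : Prop :=
  IsFacetCover V Δ D ∧ ∀ D' ⊂ D, ¬IsFacetCover V Δ D'

/-- Union of a list of finsets. -/
def listUnion (L : List (Finset α)) : Finset α := L.foldr (· ∪ ·) ∅

/-- A sequence of facets `L = [F_1, ..., F_k]` is a well ordered facet cover of the complex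
with facet set `Δ` and vertex set `V`: it is a minimal facet cover and for every facet
`H ∉ {F_1, ..., F_k}` there is `i ≤ k - 1` with `F_i ⊆ H ∪ F_{i+1} ∪ ⋯ ∪ F_k`. -/
def IsWellOrderedFacetCover (V : Finset α) (Δ : Finset (Finset α))
    (L : List (Finset α)) : Prop :=
  L.Nodup ∧ (∀ F ∈ L, F ∈ Δ) ∧ IsMinimalFacetCover V Δ L.toFinset ∧
    ∀ H ∈ Δ, H ∉ L → ∃ i : ℕ, ∃ h : i + 1 < L.length,
      L.get ⟨i, Nat.lt_of_succ_lt h⟩ ⊆ H ∪ listUnion (L.drop (i + 1))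

/-- `S` is a rooted set of facets of `Γ` with respect to the order given by the weight
function `w`: for every nonempty `T ⊆ S`, `min(T)` (the `w`-smallest facet of `Γ`
contained in the union of the facets of `T`) belongs to `T`. -/
def Rooted (w : Finset α → ℕ) (Γ S : Finset (Finset α)) : Prop :=
  ∀ T ⊆ S, T.Nonempty → ∃ G ∈ T, ∀ H ∈ Γ, H ⊆ T.sup id → w G ≤ w H

lemma listUnion_eq_sup (M : List (Finset α)) : listUnion M = M.toFinset.sup id := by
  induction M with
  | nil => simp [listUnion]
  | cons a M ih =>
    have h : listUnion (a :: M) = a ∪ listUnion M := rfl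
    rw [h, ih, List.toFinset_cons, Finset.sup_insert]
    simp [Finset.sup_eq_union]

/-- If `F_1, ..., F_i` is a well ordered facet cover of the simplicial complex with facet
set `Γ`, then for any total order (encoded by an injective weight `w`) which orders
`F_1 < F_2 < ⋯ < F_i` before all the other facets, the set `{F_1, ..., F_i}` is a facet,
i.e. a maximal rooted face, of the associated Lyubeznik simplicial complex. -/
theorem wellOrderedFacetCover_is_lyubeznik_facet (Γ : Finset (Finset α))
    (hfacets : ∀ F ∈ Γ, ∀ G ∈ Γ, F ⊆ G → F = G)
    (L : List (Finset α)) (hL : IsWellOrderedFacetCover (vertexSet Γ) Γ L)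
    (w : Finset α → ℕ) (hinj : Set.InjOn w Γ)
    (hordL : ∀ i j : Fin L.length, i < j → w (L.get i) < w (L.get j))
    (hordRest : ∀ F ∈ L, ∀ H ∈ Γ, H ∉ L → w F < w H) :
    Rooted w Γ L.toFinset ∧
      ∀ H ∈ Γ, H ∉ L.toFinset → ¬Rooted w Γ (insert H L.toFinset) := by
  obtain ⟨hnd, hsub, ⟨hcov, hmin⟩, hwoc⟩ := hL
  constructor
  · intro T hT hTne
    obtain ⟨G, hGT, hGmin⟩ := T.exists_min_image w hTne
    refine ⟨G, hGT, ?_⟩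
    intro H hHΓ hHsub
    by_contra hlt
    push_neg at hlt
    have hGL : G ∈ L := List.mem_toFinset.mp (hT hGT)
    have hHL : H ∈ L := by
      by_contra hHL
      exact absurd (hordRest G hGL H hHΓ hHL) (by omega)
    have hHnotT : H ∉ T := fun hHT => absurd (hGmin H hHT) (by omega)
    have hc : IsFacetCover (vertexSet Γ) Γ (L.toFinset.erase H) := by
      constructor
      · intro F hF
        exact hcov.1 (Finset.mem_of_mem_erase hF)
      · intro v hv
        obtain ⟨F, hFL, hvF⟩ := hcov.2 v hv
        by_cases hFH : F = H
        · subst hFH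
          obtain ⟨G', hG'T, hvG'⟩ := Finset.mem_sup.mp (hHsub hvF)
          exact ⟨G', Finset.mem_erase.mpr ⟨fun h => hHnotT (h ▸ hG'T), hT hG'T⟩, hvG'⟩
        · exact ⟨F, Finset.mem_erase.mpr ⟨hFH, hFL⟩, hvF⟩
    exact hmin _ (Finset.erase_ssubset (List.mem_toFinset.mpr hHL)) hc
  · intro H hHΓ hHL hRoot
    have hHL' : H ∉ L := fun h => hHL (List.mem_toFinset.mpr h)
    obtain ⟨i, hi, hFi⟩ := hwoc H hHΓ hHL'
    set T : Finset (Finset α) := insert H (L.drop (i+1)).toFinset with hTdef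
    have hTsub : T ⊆ insert H L.toFinset := by
      intro x hx
      rcases Finset.mem_insert.mp hx with h | h
      · exact Finset.mem_insert.mpr (Or.inl h)
      · exact Finset.mem_insert.mpr (Or.inr (List.mem_toFinset.mpr
          (List.mem_of_mem_drop (List.mem_toFinset.mp h))))
    obtain ⟨G, hGT, hGmin⟩ := hRoot T hTsub ⟨H, Finset.mem_insert_self _ _⟩
    have hFiΓ : L.get ⟨i, Nat.lt_of_succ_lt hi⟩ ∈ Γ := hsub _ (L.get_mem _)
    have hFisub : L.get ⟨i, Nat.lt_of_succ_lt hi⟩ ⊆ T.sup id := by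
      rw [hTdef, Finset.sup_insert, ← listUnion_eq_sup]
      simpa [Finset.sup_eq_union] using hFi
    have hle := hGmin _ hFiΓ hFisub
    have hlt : w (L.get ⟨i, Nat.lt_of_succ_lt hi⟩) < w G := by
      rcases Finset.mem_insert.mp hGT with h | h
      · subst h
        exact hordRest _ (L.get_mem _) G hHΓ hHL'
      · obtain ⟨⟨m, hm⟩, rfl⟩ := List.mem_iff_get.mp (List.mem_toFinset.mp h)
        have hlen : i + 1 + m < L.length := by
          have := hm
          simp [List.length_drop] at this
          omega
        have hget : (L.drop (i+1)).get ⟨m, hm⟩ = L.get ⟨i + 1 + m, hlen⟩ := by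
          simp only [List.get_eq_getElem, List.getElem_drop']
        rw [hget]
        exact hordL _ _ (by simp only [Fin.mk_lt_mk]; omega)
    omega
end

section
/- Let Γ be a simplicial complex and F a facet of Γ containing a free vertex. Let Δ be the simplicial complex on vertex set V(Γ) \ F whose facets are the minimal elements of {H \ F : H a facet of Γ, H ≠ F}, and assume V(Δ) = V(Γ) \ F. If the sequence F_1 \ F, ..., F_k \ F is a well ordered facet cover of Δ, then the sequence F_1, ..., F_k, F is a well ordered facet cover of Γ. -/
open Classical

variable {α : Type*} [DecidableEq α]

lemma mem_listUnion {x : α} : ∀ {L : List (Finset α)}, x ∈ listUnion L ↔ ∃ S ∈ L, x ∈ S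
  | [] => by simp [listUnion]
  | a :: l => by
    have ih := mem_listUnion (x := x) (L := l)
    simp only [listUnion, List.foldr_cons, Finset.mem_union, List.mem_cons]
    constructor
    · rintro (h | h)
      · exact ⟨a, Or.inl rfl, h⟩
      · obtain ⟨S, hS, hx⟩ := ih.mp h
        exact ⟨S, Or.inr hS, hx⟩
    · rintro ⟨S, (rfl | hS), hx⟩
      · exact Or.inl hx
      · exact Or.inr (ih.mpr ⟨S, hS, hx⟩)

/-- If the sequence `F_1 \ F, ..., F_k \ F` is a well ordered facet cover of `Δ`, where
`Δ` is the complex on `V(Γ) \ F` whose facets are the minimal elements of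
`{H \ F : H ∈ Γ, H ≠ F}` (the localization of `Γ` without `F`), and `F` is a facet of `Γ`
with a free vertex, then the sequence `F_1, ..., F_k, F` is a well ordered facet cover
of `Γ`. -/
theorem localization_well_ordered_facet_cover (Γ : Finset (Finset α))
    (hfacets : ∀ F ∈ Γ, ∀ G ∈ Γ, F ⊆ G → F = G)
    (F : Finset α) (hF : F ∈ Γ)
    (hfree : ∃ v ∈ F, ∀ H ∈ Γ, H ≠ F → v ∉ H)
    (Δ : Finset (Finset α))
    (hΔ : ∀ K, K ∈ Δ ↔ ((∃ H ∈ Γ, H ≠ F ∧ K = H \ F) ∧ ∀ H ∈ Γ, H ≠ F → ¬(H \ F ⊂ K)))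
    (hV : vertexSet Δ = vertexSet Γ \ F)
    (L : List (Finset α)) (hLΓ : ∀ X ∈ L, X ∈ Γ)
    (hwofc : IsWellOrderedFacetCover (vertexSet Δ) Δ (L.map fun X => X \ F)) :
    IsWellOrderedFacetCover (vertexSet Γ) Γ (L ++ [F]) := by
  classical
  obtain ⟨v, hvF, hvfree⟩ := hfree
  obtain ⟨hnd', hmem', ⟨⟨hsubΔ, hcovΔ⟩, hminΔ⟩, hwo'⟩ := hwofc
  -- the empty set is not in Δ
  have hempty : (∅ : Finset α) ∉ Δ := by
    intro h
    rw [hΔ] at h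
    obtain ⟨⟨H, hH, hHF, hHe⟩, -⟩ := h
    exact hHF (hfacets H hH F hF (Finset.sdiff_eq_empty_iff_subset.mp hHe.symm))
  -- no element of L equals F
  have hXneF : ∀ X ∈ L, X ≠ F := by
    intro X hX hXF
    have h1 := hmem' (X \ F) (List.mem_map_of_mem (f := fun X => X \ F) hX)
    rw [hXF, Finset.sdiff_self] at h1
    exact hempty h1
  have hFL : F ∉ L := fun h => hXneF F h rfl
  have hLnd : L.Nodup := hnd'.of_map
  have hnodup : (L ++ [F]).Nodup := by
    rw [List.nodup_append]
    exact ⟨hLnd, List.nodup_singleton F, by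
      intro a ha b hb
      rw [List.mem_singleton] at hb
      exact hb ▸ hXneF a ha⟩
  have hFsub : F ⊆ vertexSet Γ := Finset.le_sup (f := id) hF
  have hmemΓ : ∀ X ∈ L ++ [F], X ∈ Γ := by
    intro X hX
    rcases List.mem_append.mp hX with h | h
    · exact hLΓ X h
    · rw [List.mem_singleton] at h; exact h ▸ hF
  -- existence of a facet of Δ below H \ F
  have hexistsK : ∀ H ∈ Γ, H ≠ F → ∃ K ∈ Δ, K ⊆ H \ F := by
    intro H hH hHF
    set T := (Γ.filter (fun H' => H' ≠ F ∧ H' \ F ⊆ H \ F)).image (· \ F) with hT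
    have hne : T.Nonempty :=
      ⟨H \ F, Finset.mem_image_of_mem _ (Finset.mem_filter.mpr ⟨hH, hHF, subset_rfl⟩)⟩
    obtain ⟨M, hMT, hMmin⟩ := Finset.exists_min_image T Finset.card hne
    obtain ⟨H', hH', hMeq⟩ := Finset.mem_image.mp hMT
    rw [Finset.mem_filter] at hH'
    have hMsub : M ⊆ H \ F := hMeq ▸ hH'.2.2
    refine ⟨M, ?_, hMsub⟩
    rw [hΔ]
    refine ⟨⟨H', hH'.1, hH'.2.1, hMeq.symm⟩, ?_⟩
    intro H'' hH'' hH''F hsub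
    have hmem : H'' \ F ∈ T := Finset.mem_image_of_mem _
      (Finset.mem_filter.mpr ⟨hH'', hH''F, hsub.subset.trans hMsub⟩)
    exact absurd (hMmin _ hmem) (not_le.mpr (Finset.card_lt_card hsub))
  -- drop lemma
  have hdrop : ∀ i : ℕ, i < L.length →
      (L ++ [F]).drop (i + 1) = L.drop (i + 1) ++ [F] := by
    intro i hi
    rw [List.drop_append, Nat.sub_eq_zero_of_le (by omega), List.drop_zero]
  refine ⟨hnodup, hmemΓ, ⟨⟨?_, ?_⟩, ?_⟩, ?_⟩
  · -- subset of Γ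
    intro X hX
    rw [List.mem_toFinset] at hX
    exact hmemΓ X hX
  · -- covers vertexSet Γ
    intro w hw
    by_cases hwF : w ∈ F
    · exact ⟨F, by simp, hwF⟩
    · have hwΔ : w ∈ vertexSet Δ := by rw [hV, Finset.mem_sdiff]; exact ⟨hw, hwF⟩
      obtain ⟨K, hK, hwK⟩ := hcovΔ w hwΔ
      rw [List.mem_toFinset, List.mem_map] at hK
      obtain ⟨X, hX, rfl⟩ := hK
      exact ⟨X, by simp [hX], (Finset.mem_sdiff.mp hwK).1⟩
  · -- minimality
    intro D' hD' hcov'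
    obtain ⟨hD'Γ, hD'cov⟩ := hcov'
    have hvV : v ∈ vertexSet Γ := hFsub hvF
    obtain ⟨G, hGD', hvG⟩ := hD'cov v hvV
    have hGF : G = F := by
      by_contra h
      exact hvfree G (hD'Γ hGD') h hvG
    rw [hGF] at hGD' hvG
    clear hGF
    -- elements of D' other than G are in L
    have hD'L : ∀ X ∈ D', X ≠ F → X ∈ L := by
      intro X hX hXG
      have := hD'.subset hX
      rw [List.mem_toFinset, List.mem_append, List.mem_singleton] at this
      tauto
    set E := (D'.erase F).image (fun X => X \ F) with hE
    have hEΔ : E ⊆ Δ := by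
      intro K hK
      obtain ⟨X, hX, rfl⟩ := Finset.mem_image.mp hK
      rw [Finset.mem_erase] at hX
      exact hmem' _ (List.mem_map_of_mem (f := fun X => X \ F) (hD'L X hX.2 hX.1))
    have hEcov : ∀ w ∈ vertexSet Δ, ∃ K ∈ E, w ∈ K := by
      intro w hw
      rw [hV, Finset.mem_sdiff] at hw
      obtain ⟨X, hXD', hwX⟩ := hD'cov w hw.1
      have hXG : X ≠ F := fun h => hw.2 (h ▸ hwX)
      exact ⟨X \ F, Finset.mem_image_of_mem _ (Finset.mem_erase.mpr ⟨hXG, hXD'⟩),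
        Finset.mem_sdiff.mpr ⟨hwX, hw.2⟩⟩
    have hEsub : E ⊆ (L.map fun X => X \ F).toFinset := by
      intro K hK
      obtain ⟨X, hX, rfl⟩ := Finset.mem_image.mp hK
      rw [Finset.mem_erase] at hX
      rw [List.mem_toFinset]
      exact List.mem_map_of_mem (f := fun X => X \ F) (hD'L X hX.2 hX.1)
    have hcard1 : D'.card < (L ++ [F]).toFinset.card := Finset.card_lt_card hD'
    have hcard2 : (L ++ [F]).toFinset.card = L.length + 1 := by
      rw [List.toFinset_card_of_nodup hnodup]
      simp
    have hcard3 : ((L.map fun X => X \ F).toFinset).card = L.length := by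
      rw [List.toFinset_card_of_nodup hnd']
      simp
    have hcard4 : E.card ≤ (D'.erase F).card := Finset.card_image_le
    have hcard5 : (D'.erase F).card = D'.card - 1 := Finset.card_erase_of_mem hGD'
    have hcard6 : 1 ≤ D'.card := Finset.card_pos.mpr ⟨F, hGD'⟩
    have hEne : E ≠ (L.map fun X => X \ F).toFinset := by
      intro h
      have : E.card = L.length := by rw [h, hcard3]
      omega
    have := hminΔ E (Finset.ssubset_iff_subset_ne.mpr ⟨hEsub, hEne⟩)
    exact this ⟨hEΔ, hEcov⟩
  · -- well ordered condition
    intro H hH hHL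
    rw [List.mem_append, List.mem_singleton] at hHL
    push_neg at hHL
    obtain ⟨hHL, hHF⟩ := hHL
    obtain ⟨K, hKΔ, hKsub⟩ := hexistsK H hH hHF
    by_cases hKL : K ∈ L.map fun X => X \ F
    · -- K = (L.get i) \ F for some i
      obtain ⟨⟨i, hi⟩, hget⟩ := List.mem_iff_get.mp hKL
      rw [List.length_map] at hi
      refine ⟨i, by simp; omega, ?_⟩
      intro x hx
      have hgetL : (L ++ [F]).get ⟨i, by simp; omega⟩ = L[i] := by
        rw [List.get_eq_getElem]
        exact List.getElem_append_left (by simp only [Fin.val_mk]; omega)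
      rw [hgetL] at hx
      by_cases hxF : x ∈ F
      · refine Finset.mem_union_right _ (mem_listUnion.mpr ⟨F, ?_, hxF⟩)
        rw [hdrop i hi]
        simp
      · have hK : K = L[i] \ F := by
          rw [← hget]
          simp [List.get_eq_getElem, List.getElem_map]
        have : x ∈ L[i] \ F := Finset.mem_sdiff.mpr ⟨hx, hxF⟩
        rw [← hK] at this
        exact Finset.mem_union_left _ (Finset.mem_sdiff.mp (hKsub this)).1
    · obtain ⟨i, hi, hsub⟩ := hwo' K hKΔ hKL
      rw [List.length_map] at hi
      refine ⟨i, by simp; omega, ?_⟩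
      intro x hx
      have hgetL : (L ++ [F]).get ⟨i, by simp; omega⟩ = L[i] := by
        rw [List.get_eq_getElem]
        exact List.getElem_append_left (by simp only [Fin.val_mk]; omega)
      rw [hgetL] at hx
      by_cases hxF : x ∈ F
      · refine Finset.mem_union_right _ (mem_listUnion.mpr ⟨F, ?_, hxF⟩)
        rw [hdrop i (by omega)]
        simp
      · have hx' : x ∈ (L.map fun X => X \ F).get ⟨i, by rw [List.length_map]; omega⟩ := by
          simp only [List.get_eq_getElem, List.getElem_map]
          exact Finset.mem_sdiff.mpr ⟨hx, hxF⟩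
        have := hsub hx'
        rw [Finset.mem_union] at this
        rcases this with h | h
        · exact Finset.mem_union_left _ ((Finset.mem_sdiff.mp (hKsub h)).1)
        · obtain ⟨S, hS, hxS⟩ := mem_listUnion.mp h
          rw [← List.map_drop, List.mem_map] at hS
          obtain ⟨Y, hY, rfl⟩ := hS
          refine Finset.mem_union_right _ (mem_listUnion.mpr ⟨Y, ?_, (Finset.mem_sdiff.mp hxS).1⟩)
          rw [hdrop i (by omega)]
          exact List.mem_append_left _ hY
end

section
/- Let G be a finite simple graph and let d_1, ..., d_n be edges of G. If some permutation of d_1, ..., d_n is a well ordered edge cover of G, then G contains a strongly disjoint set of bouquets B whose union of edge sets equals {d_1, ..., d_n} and whose union of vertex sets equals V(G). -/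
open Classical

variable {α : Type*} [DecidableEq α]

namespace WOEC

/-- The "star" (class) of a cover edge `e` inside a cover `S`: all cover edges meeting `e`. -/
def cls (S : Finset (Finset α)) (e : Finset α) : Finset (Finset α) :=
  S.filter (fun f => f = e ∨ (e ∩ f).Nonempty)

lemma mem_cls {S : Finset (Finset α)} {e f : Finset α} :
    f ∈ cls S e ↔ f ∈ S ∧ (f = e ∨ (e ∩ f).Nonempty) := by
  simp [cls]

lemma cls_subset (S : Finset (Finset α)) (e : Finset α) : cls S e ⊆ S :=
  Finset.filter_subset _ _

lemma self_mem_cls {S : Finset (Finset α)} {e : Finset α} (he : e ∈ S) : e ∈ cls S e :=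
  mem_cls.mpr ⟨he, Or.inl rfl⟩

lemma mem_listUnion {L : List (Finset α)} {v : α} :
    v ∈ listUnion L ↔ ∃ F ∈ L, v ∈ F := by
  induction L with
  | nil => simp [listUnion]
  | cons a M ih =>
      rw [show listUnion (a :: M) = a ∪ listUnion M from rfl, Finset.mem_union, ih]
      simp only [List.mem_cons]
      constructor
      · rintro (h | ⟨F, hF, hv⟩)
        · exact ⟨a, Or.inl rfl, h⟩
        · exact ⟨F, Or.inr hF, hv⟩
      · rintro ⟨F, rfl | hF, hv⟩
        · exact Or.inl hv
        · exact Or.inr ⟨F, hF, hv⟩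

lemma pair_eq {e : Finset α} (hcard : e.card = 2) {x y : α} (hx : x ∈ e) (hy : y ∈ e)
    (hxy : x ≠ y) : e = {x, y} := by
  have hsub : ({x, y} : Finset α) ⊆ e := by
    intro t ht
    rcases Finset.mem_insert.mp ht with rfl | ht
    · exact hx
    · exact (Finset.mem_singleton.mp ht) ▸ hy
  have hc2 : ({x, y} : Finset α).card = 2 := Finset.card_pair hxy
  exact (Finset.eq_of_subset_of_card_le hsub (by rw [hcard, hc2])).symm

lemma other_vertex {e : Finset α} (hcard : e.card = 2) {x : α} (hx : x ∈ e) :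
    ∃ y, y ≠ x ∧ y ∈ e ∧ e = {x, y} := by
  have hne : (e.erase x).Nonempty := by
    rw [← Finset.card_pos, Finset.card_erase_of_mem hx, hcard]
    norm_num
  obtain ⟨y, hy⟩ := hne
  exact ⟨y, Finset.ne_of_mem_erase hy, Finset.mem_of_mem_erase hy,
    pair_eq hcard hx (Finset.mem_of_mem_erase hy) (Ne.symm (Finset.ne_of_mem_erase hy))⟩

/-- If two distinct cover edges share a vertex `x`, then any vertex of `e` other than `x`
is private to `e`. -/
lemma private_other {S : Finset (Finset α)}
    (hcard : ∀ e ∈ S, e.card = 2)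
    (hpriv : ∀ e ∈ S, ∃ v ∈ e, ∀ f ∈ S, v ∈ f → f = e)
    {e f : Finset α} (he : e ∈ S) (hf : f ∈ S) (hne : f ≠ e)
    {x : α} (hxe : x ∈ e) (hxf : x ∈ f)
    {y : α} (hye : y ∈ e) (hyx : y ≠ x) :
    ∀ g ∈ S, y ∈ g → g = e := by
  obtain ⟨v, hve, hv⟩ := hpriv e he
  have hvx : v ≠ x := fun h => hne (hv f hf (h ▸ hxf))
  have hyv : y = v := by
    obtain ⟨a, b, hab, rfl⟩ := Finset.card_eq_two.mp (hcard e he)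
    simp only [Finset.mem_insert, Finset.mem_singleton] at hxe hve hye
    rcases hxe with rfl | rfl <;> rcases hve with rfl | rfl <;> rcases hye with rfl | rfl <;>
      first | rfl | (exact absurd rfl hvx) | (exact absurd rfl hyx) | (exact absurd rfl hab)
  exact hyv ▸ hv

lemma cls_eq_of_mem {S : Finset (Finset α)}
    (hcard : ∀ e ∈ S, e.card = 2)
    (hpriv : ∀ e ∈ S, ∃ v ∈ e, ∀ f ∈ S, v ∈ f → f = e)
    {e f : Finset α} (he : e ∈ S) (hf : f ∈ cls S e) :
    cls S f = cls S e := by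
  obtain ⟨hfS, hcase⟩ := mem_cls.mp hf
  by_cases hef : f = e
  · subst hef; rfl
  rcases hcase with hfe | ⟨x, hx⟩
  · exact absurd hfe hef
  rw [Finset.mem_inter] at hx
  obtain ⟨hxe, hxf⟩ := hx
  ext g
  simp only [mem_cls]
  constructor
  · rintro ⟨hgS, hg⟩
    refine ⟨hgS, ?_⟩
    by_cases hge : g = e
    · exact Or.inl hge
    rcases hg with rfl | ⟨y, hy⟩
    · exact Or.inr ⟨x, Finset.mem_inter.mpr ⟨hxe, hxf⟩⟩
    rw [Finset.mem_inter] at hy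
    rcases eq_or_ne y x with rfl | hyx
    · exact Or.inr ⟨y, Finset.mem_inter.mpr ⟨hxe, hy.2⟩⟩
    · have hgf := private_other hcard hpriv hfS he (Ne.symm hef) hxf hxe hy.1 hyx g hgS hy.2
      subst hgf
      exact Or.inr ⟨x, Finset.mem_inter.mpr ⟨hxe, hxf⟩⟩
  · rintro ⟨hgS, hg⟩
    refine ⟨hgS, ?_⟩
    by_cases hgf : g = f
    · exact Or.inl hgf
    rcases hg with rfl | ⟨y, hy⟩
    · exact Or.inr ⟨x, Finset.mem_inter.mpr ⟨hxf, hxe⟩⟩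
    rw [Finset.mem_inter] at hy
    rcases eq_or_ne y x with rfl | hyx
    · exact Or.inr ⟨y, Finset.mem_inter.mpr ⟨hxf, hy.2⟩⟩
    · have hge := private_other hcard hpriv he hfS hef hxe hxf hy.1 hyx g hgS hy.2
      subst hge
      exact Or.inr ⟨x, Finset.mem_inter.mpr ⟨hxf, hxe⟩⟩

lemma exists_center {S : Finset (Finset α)}
    (hcard : ∀ e ∈ S, e.card = 2)
    (hpriv : ∀ e ∈ S, ∃ v ∈ e, ∀ f ∈ S, v ∈ f → f = e)
    {e : Finset α} (he : e ∈ S) :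
    ∃ r : α, ∀ f ∈ cls S e, r ∈ f := by
  by_cases hall : ∀ f ∈ cls S e, f = e
  · have hne : e.Nonempty := Finset.card_pos.mp (by rw [hcard e he]; norm_num)
    obtain ⟨r, hr⟩ := hne
    exact ⟨r, fun f hf => (hall f hf) ▸ hr⟩
  · push_neg at hall
    obtain ⟨f, hf, hfe⟩ := hall
    obtain ⟨hfS, hcase⟩ := mem_cls.mp hf
    rcases hcase with hfeq | ⟨x, hx⟩
    · exact absurd hfeq hfe
    rw [Finset.mem_inter] at hx
    refine ⟨x, fun g hg => ?_⟩
    obtain ⟨hgS, hgcase⟩ := mem_cls.mp hg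
    rcases hgcase with rfl | ⟨y, hy⟩
    · exact hx.1
    rw [Finset.mem_inter] at hy
    rcases eq_or_ne y x with rfl | hyx
    · exact hy.2
    · have hge := private_other hcard hpriv he hfS hfe hx.1 hx.2 hy.1 hyx g hgS hy.2
      exact hge ▸ hx.1

end WOEC

/-- If some permutation of the edges `d_1, ..., d_n` of a finite simple graph
(vertex set `V`, edges the `2`-element sets in `E`) is a well ordered edge cover of the
graph, then the graph contains a strongly disjoint set of bouquets whose union of edge
sets is `{d_1, ..., d_n}` and whose union of vertex sets is `V`: there are pairwise
vertex-disjoint stars (centers `r p`, leaf sets `Z p`) together with chosen leaves `z' p`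
such that the chosen edges `{r p, z' p}` form an induced matching. -/
theorem wellOrderedEdgeCover_gives_strongly_disjoint_bouquets (V : Finset α)
    (E : Finset (Finset α)) (hE : ∀ e ∈ E, e.card = 2 ∧ e ⊆ V)
    (n : ℕ) (d : Fin n → Finset α) (hd : ∀ p, d p ∈ E)
    (hperm : ∃ L : List (Finset α), L.Perm (List.ofFn d) ∧ IsWellOrderedFacetCover V E L) :
    ∃ (q : ℕ) (r : Fin q → α) (Z : Fin q → Finset α) (z' : Fin q → α),
      (∀ p, (Z p).Nonempty ∧ r p ∉ Z p ∧ ∀ z ∈ Z p, ({r p, z} : Finset α) ∈ E) ∧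
      (∀ p p', p ≠ p' → Disjoint (insert (r p) (Z p)) (insert (r p') (Z p'))) ∧
      (Finset.univ.biUnion fun p => (Z p).image fun z => ({r p, z} : Finset α)) =
        Finset.univ.image d ∧
      (Finset.univ.biUnion fun p => insert (r p) (Z p)) = V ∧
      (∀ p, z' p ∈ Z p) ∧
      (∀ h ∈ E, h ⊆ (Finset.univ.biUnion fun p => ({r p, z' p} : Finset α)) →
        ∃ p, h = ({r p, z' p} : Finset α)) := by
  classical
  obtain ⟨L, hLperm, hnd, hmemE, ⟨⟨hsubE, hcov⟩, hmin⟩, hwo⟩ := hperm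
  set S : Finset (Finset α) := L.toFinset with hSdef
  have hinj := List.nodup_iff_injective_get.mp hnd
  have hSE : S ⊆ E := fun f hf => hmemE f (List.mem_toFinset.mp hf)
  have hScard : ∀ e ∈ S, e.card = 2 := fun e he => (hE e (hSE he)).1
  have hSV : ∀ e ∈ S, e ⊆ V := fun e he => (hE e (hSE he)).2
  have hSimage : S = Finset.univ.image d := by
    ext x
    simp only [hSdef, List.mem_toFinset, Finset.mem_image, Finset.mem_univ, true_and]
    rw [hLperm.mem_iff, List.mem_ofFn]
  -- every cover edge has a private vertex
  have hpriv : ∀ e ∈ S, ∃ v ∈ e, ∀ f ∈ S, v ∈ f → f = e := by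
    intro e he
    by_contra hcon
    push_neg at hcon
    apply hmin (S.erase e) (Finset.erase_ssubset he)
    refine ⟨fun f hf => hSE (Finset.mem_of_mem_erase hf), fun v hv => ?_⟩
    obtain ⟨F, hF, hvF⟩ := hcov v hv
    by_cases hFe : F = e
    · subst hFe
      obtain ⟨g, hgS, hvg, hge⟩ := hcon v hvF
      exact ⟨g, Finset.mem_erase.mpr ⟨hge, hgS⟩, hvg⟩
    · exact ⟨F, Finset.mem_erase.mpr ⟨hFe, hF⟩, hvF⟩
  -- the stars (classes)
  set T : Finset (Finset (Finset α)) := S.image (WOEC.cls S) with hTdef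
  refine ⟨T.card, ?_⟩
  set c : Fin T.card → Finset (Finset α) :=
    fun p => ((T.equivFin).symm p : Finset (Finset α)) with hc
  have hcT : ∀ p, c p ∈ T := fun p => ((T.equivFin).symm p).2
  have hcinj : Function.Injective c := fun a b hab =>
    (T.equivFin).symm.injective (Subtype.ext hab)
  have hsurj : ∀ t ∈ T, ∃ p, c p = t := fun t ht =>
    ⟨T.equivFin ⟨t, ht⟩, by simp [hc]⟩
  have hcsubS : ∀ p, c p ⊆ S := by
    intro p
    obtain ⟨e, heS, hce⟩ := Finset.mem_image.mp (hcT p)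
    rw [← hce]
    exact WOEC.cls_subset S e
  have hcne : ∀ p, (c p).Nonempty := by
    intro p
    obtain ⟨e, heS, hce⟩ := Finset.mem_image.mp (hcT p)
    exact ⟨e, hce ▸ WOEC.self_mem_cls heS⟩
  have hstab : ∀ p, ∀ f ∈ c p, WOEC.cls S f = c p := by
    intro p f hf
    obtain ⟨e, heS, hce⟩ := Finset.mem_image.mp (hcT p)
    rw [← hce] at hf ⊢
    exact WOEC.cls_eq_of_mem hScard hpriv heS hf
  have hclass_of : ∀ f ∈ S, ∃ p, f ∈ c p := by
    intro f hf
    obtain ⟨p, hp⟩ := hsurj (WOEC.cls S f) (Finset.mem_image_of_mem _ hf)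
    exact ⟨p, hp ▸ WOEC.self_mem_cls hf⟩
  have hsame : ∀ p, ∀ f ∈ c p, ∀ g ∈ S, (f ∩ g).Nonempty → g ∈ c p := by
    intro p f hf g hg hfg
    have h1 : g ∈ WOEC.cls S f := WOEC.mem_cls.mpr ⟨hg, Or.inr hfg⟩
    rwa [hstab p f hf] at h1
  have hdisj : ∀ p p', p ≠ p' → Disjoint ((c p).sup id) ((c p').sup id) := by
    intro p p' hne
    rw [Finset.disjoint_left]
    intro x hx hx'
    rw [Finset.mem_sup] at hx hx'
    obtain ⟨f, hf, hxf⟩ := hx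
    obtain ⟨g, hg, hxg⟩ := hx'
    have hgc : g ∈ c p := hsame p f hf g (hcsubS p' hg) ⟨x, Finset.mem_inter.mpr ⟨hxf, hxg⟩⟩
    exact hne (hcinj ((hstab p g hgc).symm.trans (hstab p' g hg)))
  -- choose center, last edge, and its leaf, for every star
  have hmain : ∀ p : Fin T.card, ∃ (rp zp : α) (jp : Fin L.length),
      (∀ f ∈ c p, rp ∈ f) ∧ rp ≠ zp ∧ L.get jp = {rp, zp} ∧ L.get jp ∈ c p ∧
      (∀ k : Fin L.length, jp < k → L.get k ∉ c p) := by
    intro p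
    obtain ⟨e, heS, hce⟩ := Finset.mem_image.mp (hcT p)
    obtain ⟨rp, hrp⟩ := WOEC.exists_center hScard hpriv heS
    rw [hce] at hrp
    have hIne : (Finset.univ.filter (fun k : Fin L.length => L.get k ∈ c p)).Nonempty := by
      obtain ⟨f, hf⟩ := hcne p
      have hfL : f ∈ L := List.mem_toFinset.mp (hcsubS p hf)
      obtain ⟨k, hk⟩ := List.mem_iff_get.mp hfL
      exact ⟨k, Finset.mem_filter.mpr ⟨Finset.mem_univ _, hk ▸ hf⟩⟩
    set I := Finset.univ.filter (fun k : Fin L.length => L.get k ∈ c p) with hI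
    refine ⟨rp, ?_⟩
    have hjp : L.get (I.max' hIne) ∈ c p := (Finset.mem_filter.mp (I.max'_mem hIne)).2
    have hlast : ∀ k, I.max' hIne < k → L.get k ∉ c p := by
      intro k hk hkc
      exact absurd (I.le_max' k (Finset.mem_filter.mpr ⟨Finset.mem_univ _, hkc⟩))
        (not_le.mpr hk)
    obtain ⟨zp, hzr, hzmem, hedge⟩ :=
      WOEC.other_vertex (hScard _ (hcsubS p hjp)) (hrp _ hjp)
    exact ⟨zp, I.max' hIne, hrp, Ne.symm hzr, hedge, hjp, hlast⟩
  choose r z' j hr hrz hedge hjc hjlast using hmain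
  set Z : Fin T.card → Finset α := fun p => ((c p).sup id).erase (r p) with hZ
  have hrsup : ∀ p, r p ∈ (c p).sup id := by
    intro p
    obtain ⟨f, hf⟩ := hcne p
    exact Finset.mem_sup.mpr ⟨f, hf, hr p f hf⟩
  have hinsZ : ∀ p, insert (r p) (Z p) = (c p).sup id := fun p =>
    Finset.insert_erase (hrsup p)
  have hedge_mem : ∀ p, ∀ f ∈ c p, ∃ w ∈ Z p, f = {r p, w} := by
    intro p f hf
    obtain ⟨w, hwr, hwf, hfeq⟩ := WOEC.other_vertex (hScard f (hcsubS p hf)) (hr p f hf)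
    exact ⟨w, Finset.mem_erase.mpr ⟨hwr, Finset.mem_sup.mpr ⟨f, hf, hwf⟩⟩, hfeq⟩
  have hZedge : ∀ p, ∀ w ∈ Z p, ({r p, w} : Finset α) ∈ c p := by
    intro p w hw
    obtain ⟨hwr, hwsup⟩ := Finset.mem_erase.mp hw
    obtain ⟨f, hf, hwf⟩ := Finset.mem_sup.mp hwsup
    have hfeq : f = {r p, w} :=
      WOEC.pair_eq (hScard f (hcsubS p hf)) (hr p f hf) hwf (Ne.symm hwr)
    exact hfeq ▸ hf
  have hz'Z : ∀ p, z' p ∈ Z p := by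
    intro p
    refine Finset.mem_erase.mpr ⟨Ne.symm (hrz p),
      Finset.mem_sup.mpr ⟨L.get (j p), hjc p, ?_⟩⟩
    rw [hedge p]
    exact Finset.mem_insert.mpr (Or.inr (Finset.mem_singleton_self _))
  have hz'sup : ∀ p, z' p ∈ (c p).sup id := fun p => Finset.mem_of_mem_erase (hz'Z p)
  have hlocate : ∀ {v : α} {p p1 : Fin T.card}, v ∈ (c p).sup id →
      v ∈ ({r p1, z' p1} : Finset α) → p1 = p ∧ v ∈ ({r p, z' p} : Finset α) := by
    intro v p p1 hv hv1
    have hvs1 : v ∈ (c p1).sup id := by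
      rcases Finset.mem_insert.mp hv1 with rfl | hv1'
      · exact hrsup p1
      · exact (Finset.mem_singleton.mp hv1') ▸ hz'sup p1
    have hpp : p1 = p := by
      by_contra hne
      exact Finset.disjoint_left.mp (hdisj p1 p hne) hvs1 hv
    exact ⟨hpp, hpp ▸ hv1⟩
  refine ⟨r, Z, z', ?_, ?_, ?_, ?_, hz'Z, ?_⟩
  · intro p
    refine ⟨?_, Finset.notMem_erase _ _, ?_⟩
    · obtain ⟨f, hf⟩ := hcne p
      obtain ⟨w, hw, -⟩ := hedge_mem p f hf
      exact ⟨w, hw⟩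
    · intro z hz
      exact hSE (hcsubS p (hZedge p z hz))
  · intro p p' hne
    rw [hinsZ p, hinsZ p']
    exact hdisj p p' hne
  · rw [← hSimage]
    ext f
    simp only [Finset.mem_biUnion, Finset.mem_univ, true_and, Finset.mem_image]
    constructor
    · rintro ⟨p, z, hz, rfl⟩
      exact hcsubS p (hZedge p z hz)
    · intro hf
      obtain ⟨p, hp⟩ := hclass_of f hf
      obtain ⟨w, hw, hfeq⟩ := hedge_mem p f hp
      exact ⟨p, w, hw, hfeq.symm⟩
  · ext v
    simp only [Finset.mem_biUnion, Finset.mem_univ, true_and]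
    constructor
    · rintro ⟨p, hp⟩
      rw [hinsZ p, Finset.mem_sup] at hp
      obtain ⟨f, hf, hvf⟩ := hp
      exact hSV f (hcsubS p hf) hvf
    · intro hv
      obtain ⟨F, hF, hvF⟩ := hcov v hv
      obtain ⟨p, hp⟩ := hclass_of F hF
      exact ⟨p, by rw [hinsZ p]; exact Finset.mem_sup.mpr ⟨F, hp, hvF⟩⟩
  · intro h hhE hhsub
    have hhsub' : ∀ v ∈ h, ∃ p, v ∈ ({r p, z' p} : Finset α) := by
      intro v hv
      have hm := hhsub hv
      rw [Finset.mem_biUnion] at hm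
      obtain ⟨p, -, hp⟩ := hm
      exact ⟨p, hp⟩
    by_cases hhS : h ∈ S
    · obtain ⟨p, hp⟩ := hclass_of h hhS
      refine ⟨p, ?_⟩
      have hsubp : h ⊆ {r p, z' p} := by
        intro v hv
        obtain ⟨p1, hv1⟩ := hhsub' v hv
        exact (hlocate (Finset.mem_sup.mpr ⟨h, hp, hv⟩) hv1).2
      refine Finset.eq_of_subset_of_card_le hsubp ?_
      rw [(hE h hhE).1, Finset.card_pair (hrz p)]
    · have hhL : h ∉ L := fun hh => hhS (List.mem_toFinset.mpr hh)
      obtain ⟨i, hi, hFsub⟩ := hwo h hhE hhL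
      set Fi := L.get ⟨i, Nat.lt_of_succ_lt hi⟩ with hFi
      have hFiS : Fi ∈ S := List.mem_toFinset.mpr (L.get_mem _)
      obtain ⟨p, hpFi⟩ := hclass_of Fi hFiS
      have hrFi : r p ∈ Fi := hr p Fi hpFi
      obtain ⟨w, hwr, hwFi, hFieq⟩ := WOEC.other_vertex (hScard Fi hFiS) hrFi
      have hlater : ∀ v ∈ Fi, v ∉ h →
          ∃ k : Fin L.length, (i : ℕ) < (k : ℕ) ∧ v ∈ L.get k := by
        intro v hv hvh
        have hm := hFsub hv
        rw [Finset.mem_union] at hm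
        rcases hm with h1 | h1
        · exact absurd h1 hvh
        · rw [WOEC.mem_listUnion] at h1
          obtain ⟨F, hF, hvF⟩ := h1
          obtain ⟨kk, hkk⟩ := List.mem_iff_get.mp hF
          have hklen : i + 1 + (kk : ℕ) < L.length := by
            have hlt := kk.isLt
            have hld : (List.drop (i + 1) L).length = L.length - (i + 1) :=
              List.length_drop
            omega
          refine ⟨⟨i + 1 + kk, hklen⟩, show i < i + 1 + (kk : ℕ) by omega, ?_⟩
          have hgetF : L.get ⟨i + 1 + kk, hklen⟩ = F := by
            rw [← hkk]
            simp only [List.get_eq_getElem, List.getElem_drop]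
          rw [hgetF]
          exact hvF
      have hwh : w ∈ h := by
        by_contra hwh
        obtain ⟨k, hik, hwk⟩ := hlater w hwFi hwh
        have hkS : L.get k ∈ S := List.mem_toFinset.mpr (L.get_mem _)
        have hkc : L.get k ∈ c p :=
          hsame p Fi hpFi _ hkS ⟨w, Finset.mem_inter.mpr ⟨hwFi, hwk⟩⟩
        have hkeq : L.get k = Fi := by
          rw [hFieq]
          exact WOEC.pair_eq (hScard _ hkS) (hr p _ hkc) hwk (Ne.symm hwr)
        have h3 := hinj (hkeq.trans hFi)
        rw [Fin.ext_iff] at h3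
        simp at h3
        omega
      have hwz : w = z' p := by
        obtain ⟨p1, hv1⟩ := hhsub' w hwh
        have hm := (hlocate (Finset.mem_sup.mpr ⟨Fi, hpFi, hwFi⟩) hv1).2
        rcases Finset.mem_insert.mp hm with h2 | h2
        · exact absurd h2 hwr
        · exact Finset.mem_singleton.mp h2
      have hFichosen : Fi = L.get (j p) := by
        rw [hFieq, hwz, ← hedge p]
      have hij : (i : ℕ) = ((j p) : ℕ) := by
        have h4 := hinj (hFi.symm.trans hFichosen)
        rw [Fin.ext_iff] at h4
        simpa using h4
      have hrh : r p ∈ h := by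
        by_contra hrh
        obtain ⟨k, hik, hrk⟩ := hlater (r p) hrFi hrh
        have hkS : L.get k ∈ S := List.mem_toFinset.mpr (L.get_mem _)
        have hkc : L.get k ∈ c p :=
          hsame p Fi hpFi _ hkS ⟨r p, Finset.mem_inter.mpr ⟨hrFi, hrk⟩⟩
        exact hjlast p k (by rw [Fin.lt_def]; omega) hkc
      have hFih : Fi ⊆ h := by
        rw [hFieq]
        intro t ht
        rcases Finset.mem_insert.mp ht with rfl | ht'
        · exact hrh
        · exact (Finset.mem_singleton.mp ht') ▸ hwh
      have hFiheq : Fi = h := Finset.eq_of_subset_of_card_le hFih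
        (by rw [(hE h hhE).1, hScard Fi hFiS])
      exact absurd (hFiheq ▸ hFiS) hhS
end

section
/- Let G be a finite simple graph containing a strongly disjoint set of bouquets B = {B_1, ..., B_q} with union of vertex sets equal to V(G), where for each p the chosen edge s_p ∈ E(B_p) is such that {s_1, ..., s_q} is an induced matching in G. Then listing the edges of E(B_1) ∪ ... ∪ E(B_q) \ {s_1, ..., s_q} in any fixed order followed by s_1, ..., s_q gives a well ordered edge cover of G. -/
open Classical

variable {α : Type*} [DecidableEq α]

lemma listUnion_cons (x : Finset α) (l : List (Finset α)) :
    listUnion (x :: l) = x ∪ listUnion l := rfl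

lemma listUnion_append (a b : List (Finset α)) :
    listUnion (a ++ b) = listUnion a ∪ listUnion b := by
  induction a with
  | nil => simp [listUnion]
  | cons x t ih =>
      rw [List.cons_append, listUnion_cons, listUnion_cons, ih, Finset.union_assoc]

lemma subset_listUnion_of_mem {F : Finset α} {l : List (Finset α)} (h : F ∈ l) :
    F ⊆ listUnion l := by
  induction l with
  | nil => simp at h
  | cons x t ih =>
      rw [listUnion_cons]
      rcases List.mem_cons.mp h with h | h
      · exact h ▸ Finset.subset_union_left
      · exact (ih h).trans Finset.subset_union_right

/-- Let a finite simple graph (vertex set `V`, edges the `2`-element sets in `E`) contain a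
strongly disjoint set of bouquets (stars with centers `r p`, leaf sets `Z p`, chosen
leaves `z' p`, the chosen edges `s p = {r p, z' p}` forming an induced matching) whose
union of vertex sets is `V`.  Then listing the non-chosen edges of the bouquets in any
fixed order, followed by `s 1, ..., s q`, gives a well ordered edge cover of the graph. -/
theorem strongly_disjoint_bouquets_give_wellOrderedEdgeCover (V : Finset α)
    (E : Finset (Finset α)) (hE : ∀ e ∈ E, e.card = 2 ∧ e ⊆ V)
    (q : ℕ) (r : Fin q → α) (Z : Fin q → Finset α) (z' : Fin q → α)
    (hB : ∀ p, (Z p).Nonempty ∧ r p ∉ Z p ∧ ∀ z ∈ Z p, ({r p, z} : Finset α) ∈ E)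
    (hdisj : ∀ p p', p ≠ p' → Disjoint (insert (r p) (Z p)) (insert (r p') (Z p')))
    (hVeq : (Finset.univ.biUnion fun p => insert (r p) (Z p)) = V)
    (hz' : ∀ p, z' p ∈ Z p)
    (hindmatch : ∀ h ∈ E, h ⊆ (Finset.univ.biUnion fun p => ({r p, z' p} : Finset α)) →
      ∃ p, h = ({r p, z' p} : Finset α))
    (L0 : List (Finset α)) (hL0nd : L0.Nodup)
    (hL0 : L0.toFinset =
      (Finset.univ.biUnion fun p => (Z p).image fun z => ({r p, z} : Finset α)) \
        Finset.univ.image (fun p => ({r p, z' p} : Finset α))) :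
    IsWellOrderedFacetCover V E (L0 ++ List.ofFn fun p => ({r p, z' p} : Finset α)) := by
  classical
  set s : Fin q → Finset α := fun p => ({r p, z' p} : Finset α) with hs
  set A : Finset (Finset α) :=
    Finset.univ.biUnion (fun p => (Z p).image fun z => ({r p, z} : Finset α)) with hA
  set S : Finset (Finset α) := Finset.univ.image (fun p => ({r p, z' p} : Finset α)) with hSdef
  set L : List (Finset α) := L0 ++ List.ofFn s with hLdef
  -- basic facts
  have z_ne_r : ∀ (p p' : Fin q) (z : α), z ∈ Z p → z ≠ r p' := by
    intro p p' z hz he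
    by_cases hpp : p = p'
    · subst hpp
      exact (hB p).2.1 (he ▸ hz)
    · exact Finset.disjoint_left.mp (hdisj p p' hpp) (Finset.mem_insert_of_mem hz)
        (he ▸ Finset.mem_insert_self _ _)
  have z_eq : ∀ (p p' : Fin q) (z w : α), z ∈ Z p → w ∈ Z p' →
      z ∈ ({r p', w} : Finset α) → p = p' ∧ z = w := by
    intro p p' z w hz hw hmem
    rcases Finset.mem_insert.mp hmem with h | h
    · exact absurd h (z_ne_r p p' z hz)
    · have hzw : z = w := Finset.mem_singleton.mp h
      subst hzw
      constructor
      · by_contra hpp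
        exact Finset.disjoint_left.mp (hdisj p p' hpp) (Finset.mem_insert_of_mem hz)
          (Finset.mem_insert_of_mem hw)
      · rfl
  have pair_eq : ∀ (p p' : Fin q) (z w : α), z ∈ Z p → w ∈ Z p' →
      ({r p, z} : Finset α) = {r p', w} → p = p' ∧ z = w := by
    intro p p' z w hz hw h
    have : z ∈ ({r p', w} : Finset α) := h ▸ Finset.mem_insert_of_mem (Finset.mem_singleton_self z)
    exact z_eq p p' z w hz hw this
  have mem_A : ∀ F : Finset α, F ∈ A ↔ ∃ p, ∃ z ∈ Z p, F = ({r p, z} : Finset α) := by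
    intro F
    simp only [hA, Finset.mem_biUnion, Finset.mem_univ, true_and, Finset.mem_image]
    constructor
    · rintro ⟨p, z, hz, he⟩; exact ⟨p, z, hz, he.symm⟩
    · rintro ⟨p, z, hz, he⟩; exact ⟨p, z, hz, he.symm⟩
  have hSA : S ⊆ A := by
    intro F hF
    rcases Finset.mem_image.mp hF with ⟨p, -, he⟩
    exact (mem_A F).mpr ⟨p, z' p, hz' p, he.symm⟩
  have ofFn_toFinset : (List.ofFn s).toFinset = S := by
    ext F
    simp [hSdef, List.mem_ofFn, eq_comm, hs]
  have hLtoFinset : L.toFinset = A := by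
    rw [hLdef, List.toFinset_append, hL0, ofFn_toFinset,
      Finset.sdiff_union_self_eq_union, Finset.union_eq_left.mpr hSA]
  have unique_cover : ∀ (p : Fin q) (z : α), z ∈ Z p → ∀ F ∈ A, z ∈ F →
      F = ({r p, z} : Finset α) := by
    intro p z hz F hF hzF
    rcases (mem_A F).mp hF with ⟨p', w, hw, he⟩
    subst he
    obtain ⟨hpp, hzw⟩ := z_eq p p' z w hz hw hzF
    subst hpp; subst hzw; rfl
  have s_mem_L : ∀ p : Fin q, s p ∈ L := by
    intro p
    exact List.mem_append_right _ ((List.mem_ofFn (f := s) (a := s p)).mpr ⟨p, rfl⟩)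
  have memL_A : ∀ F ∈ L, F ∈ A := by
    intro F hF
    rw [← hLtoFinset]; exact List.mem_toFinset.mpr hF
  have qpos : ∀ (_ : Fin q), 0 < q := fun p => p.pos
  refine ⟨?_, ?_, ⟨⟨?_, ?_⟩, ?_⟩, ?_⟩
  · -- Nodup
    refine List.Nodup.append hL0nd ?_ ?_
    · rw [List.nodup_ofFn]
      intro p p' h
      exact (pair_eq p p' (z' p) (z' p') (hz' p) (hz' p') h).1
    · intro F hF hF'
      have h1 : F ∈ L0.toFinset := List.mem_toFinset.mpr hF
      rw [hL0] at h1
      have h2 : F ∈ S := by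
        rw [← ofFn_toFinset]; exact List.mem_toFinset.mpr hF'
      exact (Finset.mem_sdiff.mp h1).2 h2
  · -- all in E
    intro F hF
    rcases (mem_A F).mp (memL_A F hF) with ⟨p, z, hz, he⟩
    exact he ▸ (hB p).2.2 z hz
  · -- cover ⊆ E
    intro F hF
    rw [hLtoFinset] at hF
    rcases (mem_A F).mp hF with ⟨p, z, hz, he⟩
    exact he ▸ (hB p).2.2 z hz
  · -- covers all vertices
    intro v hv
    rw [← hVeq] at hv
    rcases Finset.mem_biUnion.mp hv with ⟨p, -, hvp⟩
    rcases Finset.mem_insert.mp hvp with h | h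
    · refine ⟨s p, List.mem_toFinset.mpr (s_mem_L p), ?_⟩
      exact h ▸ Finset.mem_insert_self _ _
    · refine ⟨({r p, v} : Finset α), ?_, Finset.mem_insert_of_mem (Finset.mem_singleton_self v)⟩
      rw [hLtoFinset]
      exact (mem_A _).mpr ⟨p, v, h, rfl⟩
  · -- minimality
    intro D' hD' hcov
    obtain ⟨e, heL, heD'⟩ := Finset.exists_of_ssubset hD'
    have heA : e ∈ A := hLtoFinset ▸ heL
    rcases (mem_A e).mp heA with ⟨p, z, hz, he⟩
    have hzV : z ∈ V := by
      rw [← hVeq]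
      exact Finset.mem_biUnion.mpr ⟨p, Finset.mem_univ p, Finset.mem_insert_of_mem hz⟩
    obtain ⟨F, hFD', hzF⟩ := hcov.2 z hzV
    have hFA : F ∈ A := hLtoFinset ▸ hD'.subset hFD'
    have : F = e := he ▸ unique_cover p z hz F hFA hzF
    exact heD' (this ▸ hFD')
  · -- well ordered condition
    intro H hHE hHL
    have hHsubM : ¬ H ⊆ Finset.univ.biUnion (fun p => ({r p, z' p} : Finset α)) := by
      intro hsub
      rcases hindmatch H hHE hsub with ⟨p, he⟩
      exact hHL (he ▸ s_mem_L p)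
    obtain ⟨v, hvH, hvM⟩ := Finset.not_subset.mp hHsubM
    have hvV : v ∈ V := (hE H hHE).2 hvH
    rw [← hVeq] at hvV
    rcases Finset.mem_biUnion.mp hvV with ⟨p, -, hvp⟩
    have hvZ : v ∈ Z p := by
      rcases Finset.mem_insert.mp hvp with h | h
      · exfalso
        exact hvM (Finset.mem_biUnion.mpr ⟨p, Finset.mem_univ p,
          h ▸ Finset.mem_insert_self _ _⟩)
      · exact h
    have hvz' : v ≠ z' p := by
      intro h
      exact hvM (Finset.mem_biUnion.mpr ⟨p, Finset.mem_univ p,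
        h ▸ Finset.mem_insert_of_mem (Finset.mem_singleton_self _)⟩)
    set e : Finset α := ({r p, v} : Finset α) with hedef
    have heL0 : e ∈ L0 := by
      rw [← List.mem_toFinset, hL0, Finset.mem_sdiff]
      refine ⟨(mem_A e).mpr ⟨p, v, hvZ, rfl⟩, ?_⟩
      intro hmem
      rcases Finset.mem_image.mp hmem with ⟨p', -, he'⟩
      obtain ⟨hpp, hzz⟩ := pair_eq p' p (z' p') v (hz' p') hvZ he'
      exact hvz' (hpp ▸ hzz).symm
    obtain ⟨i, hie⟩ := List.mem_iff_get.mp heL0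
    have hiL : (i : ℕ) + 1 ≤ L0.length := i.isLt
    have hlen : (i : ℕ) + 1 < L.length := by
      rw [hLdef, List.length_append, List.length_ofFn]
      have := qpos p
      omega
    refine ⟨i, hlen, ?_⟩
    · have hget : L.get ⟨i, Nat.lt_of_succ_lt hlen⟩ = e := by
        have h1 : (L0 ++ List.ofFn s).get ⟨(i : ℕ), by
            rw [List.length_append]; exact Nat.lt_of_succ_le (Nat.le_add_right_of_le hiL)⟩
            = L0.get ⟨(i : ℕ), i.isLt⟩ := by simp only [List.get_eq_getElem]; exact List.getElem_append_left i.isLt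
        exact h1.trans hie
      rw [hget]
      have hdrop : L.drop ((i : ℕ) + 1) = L0.drop ((i : ℕ) + 1) ++ List.ofFn s := by
        rw [hLdef, List.drop_append_of_le_length hiL]
      intro x hx
      rcases Finset.mem_insert.mp hx with h | h
      · -- x = r p, in the tail
        apply Finset.mem_union_right
        rw [hdrop, listUnion_append]
        apply Finset.mem_union_right
        have : r p ∈ s p := Finset.mem_insert_self _ _
        exact subset_listUnion_of_mem ((List.mem_ofFn (f := s) (a := s p)).mpr ⟨p, rfl⟩) (h ▸ this)
      · have : x = v := Finset.mem_singleton.mp h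
        exact Finset.mem_union_left _ (this ▸ hvH)
end

section
/- Let I be a monomial ideal in a polynomial ring S over a field, with minimal generating set totally ordered by <. Suppose F = {m_{t_1}, ..., m_{t_i}} is a facet of the Lyubeznik simplicial complex Λ_{I,<} such that for every j, the lcm of F minus m_{t_j} is strictly smaller than lcm(F). Then the multigraded Betti number b_{i, q}(S/I) is nonzero, where q = lcm(m_{t_1}, ..., m_{t_i}). -/
open Classical

/-- Chains of the (augmented) Taylor subcomplex determined by the predicate `P` on
subsets of the `s` generators: the free `k`-module on faces of cardinality `j`
(the empty face corresponds to `j = 0`). -/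
noncomputable abbrev TaylorChain (k : Type) [Field k] (s : ℕ) (P : Finset (Fin s) → Prop)
    (j : ℕ) : Type :=
  {σ : Finset (Fin s) // P σ ∧ σ.card = j} → k

/-- The simplicial boundary map from chains on faces of cardinality `j + 1` to chains on
faces of cardinality `j`, with the usual signs. -/
noncomputable def taylorBd (k : Type) [Field k] (s : ℕ) (P : Finset (Fin s) → Prop) (j : ℕ) :
    TaylorChain k s P (j + 1) →ₗ[k] TaylorChain k s P j where
  toFun f τ := ∑ v : Fin s,
    if h : v ∉ τ.1 ∧ P (insert v τ.1) then
      (-1 : k) ^ (τ.1.filter (· < v)).card *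
        f ⟨insert v τ.1, h.2, by rw [Finset.card_insert_of_notMem h.1, τ.2.2]⟩
    else 0
  map_add' f g := by
    funext τ
    simp only [Pi.add_apply]
    rw [← Finset.sum_add_distrib]
    refine Finset.sum_congr rfl fun v _ => ?_
    split
    · simp [mul_add]
    · simp
  map_smul' c f := by
    funext τ
    simp only [Pi.smul_apply, smul_eq_mul, RingHom.id_apply]
    rw [Finset.mul_sum]
    refine Finset.sum_congr rfl fun v _ => ?_
    split
    · ring
    · simp

/-- The multigraded Betti number `b_{i,m}(S/I)` of the quotient by a monomial ideal `I`
with `s` generators, computed via the Bayer–Peeva–Sturmfels formula: for `i ≥ 1` it is the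
dimension of the `(i - 2)`nd reduced simplicial homology of the subcomplex of the Taylor
complex consisting of the faces whose lcm strictly divides `m`; that subcomplex is recorded
by the predicate `P` (with faces indexed by their cardinality, the empty face included), so
that `b_{i,m}(S/I) = dim ker ∂_{i-1} - dim im ∂_i`. -/
noncomputable def bettiOfTaylor (k : Type) [Field k] (s : ℕ)
    (P : Finset (Fin s) → Prop) : ℕ → ℕ
  | 0 => if P ∅ then 0 else 1
  | 1 => Module.finrank k (TaylorChain k s P 0) -
      Module.finrank k (LinearMap.range (taylorBd k s P 0))
  | (i + 2) => Module.finrank k (LinearMap.ker (taylorBd k s P i)) -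
      Module.finrank k (LinearMap.range (taylorBd k s P (i + 1)))


section BarileAux

open Classical

variable {k : Type} [Field k]

lemma filter_insert_card {s : ℕ} {τ : Finset (Fin s)} {v u : Fin s} (hv : v ∉ τ) :
    ((insert v τ).filter (· < u)).card
      = (τ.filter (· < u)).card + (if v < u then 1 else 0) := by
  rw [Finset.filter_insert]
  split
  · rw [Finset.card_insert_of_notMem (fun hm => hv (Finset.mem_filter.mp hm).1)]
  · rw [add_zero]

lemma taylor_bd_bd (k : Type) [Field k] (s : ℕ) (P : Finset (Fin s) → Prop)
    (hP : ∀ {a b : Finset (Fin s)}, a ⊆ b → P b → P a) (j : ℕ)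
    (f : TaylorChain k s P (j + 1 + 1)) :
    taylorBd k s P j (taylorBd k s P (j + 1) f) = 0 := by
  funext τ
  show (∑ v : Fin s, _) = (0 : k)
  have key : ∀ v : Fin s,
      (if h : v ∉ τ.1 ∧ P (insert v τ.1) then
        (-1 : k) ^ (τ.1.filter (· < v)).card *
          (taylorBd k s P (j+1)) f ⟨insert v τ.1, h.2, by
            rw [Finset.card_insert_of_notMem h.1, τ.2.2]⟩
      else 0)
      = ∑ u : Fin s,
        (if h : v ∉ τ.1 ∧ u ∉ τ.1 ∧ v ≠ u ∧ P (insert u (insert v τ.1)) then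
          (-1 : k) ^ (τ.1.filter (· < v)).card *
            ((-1 : k) ^ ((insert v τ.1).filter (· < u)).card *
              f ⟨insert u (insert v τ.1), h.2.2.2, by
                rw [Finset.card_insert_of_notMem, Finset.card_insert_of_notMem h.1, τ.2.2]
                simp only [Finset.mem_insert, not_or]
                exact ⟨fun e => h.2.2.1 e.symm, h.2.1⟩⟩)
        else 0) := by
    intro v
    by_cases hv : v ∉ τ.1 ∧ P (insert v τ.1)
    · rw [dif_pos hv]
      show (-1:k)^ _ * (∑ u : Fin s, _) = _
      rw [Finset.mul_sum]
      refine Finset.sum_congr rfl fun u _ => ?_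
      by_cases hu : u ∉ insert v τ.1 ∧ P (insert u (insert v τ.1))
      · rw [dif_pos hu]
        have hu' : u ∉ τ.1 ∧ v ≠ u := by
          constructor
          · exact fun hm => hu.1 (Finset.mem_insert_of_mem hm)
          · exact fun e => hu.1 (e ▸ Finset.mem_insert_self v τ.1)
        rw [dif_pos ⟨hv.1, hu'.1, hu'.2, hu.2⟩]
      · rw [dif_neg hu, mul_zero]
        rw [dif_neg]
        rintro ⟨h1, h2, h3, h4⟩
        exact hu ⟨by simp only [Finset.mem_insert, not_or]; exact ⟨fun e => h3 e.symm, h2⟩, h4⟩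
    · rw [dif_neg hv]
      symm
      refine Finset.sum_eq_zero fun u _ => ?_
      rw [dif_neg]
      rintro ⟨h1, h2, h3, h4⟩
      exact hv ⟨h1, hP (Finset.subset_insert u _) h4⟩
  calc (∑ v : Fin s, _) = ∑ v : Fin s, ∑ u : Fin s,
        (if h : v ∉ τ.1 ∧ u ∉ τ.1 ∧ v ≠ u ∧ P (insert u (insert v τ.1)) then
          (-1 : k) ^ (τ.1.filter (· < v)).card *
            ((-1 : k) ^ ((insert v τ.1).filter (· < u)).card *
              f ⟨insert u (insert v τ.1), h.2.2.2, by
                rw [Finset.card_insert_of_notMem, Finset.card_insert_of_notMem h.1, τ.2.2]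
                simp only [Finset.mem_insert, not_or]
                exact ⟨fun e => h.2.2.1 e.symm, h.2.1⟩⟩)
        else 0) := Finset.sum_congr rfl fun v _ => key v
    _ = 0 := by
      rw [← Finset.sum_product']
      refine Finset.sum_involution (fun p _ => (p.2, p.1)) ?_ ?_ (fun _ _ => Finset.mem_univ _)
        (fun _ _ => rfl)
      · rintro ⟨v, u⟩ -
        dsimp only
        by_cases hq : v ∉ τ.1 ∧ u ∉ τ.1 ∧ v ≠ u ∧ P (insert u (insert v τ.1))
        · rw [dif_pos hq]
          have hq' : u ∉ τ.1 ∧ v ∉ τ.1 ∧ u ≠ v ∧ P (insert v (insert u τ.1)) :=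
            ⟨hq.2.1, hq.1, hq.2.2.1.symm, by rw [Finset.insert_comm]; exact hq.2.2.2⟩
          rw [dif_pos hq']
          have hcomm : insert v (insert u τ.1) = insert u (insert v τ.1) :=
            Finset.insert_comm _ _ _
          simp only [hcomm]
          rw [filter_insert_card hq.1, filter_insert_card hq.2.1]
          rcases lt_or_gt_of_ne hq.2.2.1 with hlt | hgt
          · rw [if_pos hlt, if_neg (not_lt_of_gt hlt)]
            ring
          · rw [if_neg (not_lt_of_gt hgt), if_pos hgt]
            ring
        · rw [dif_neg hq, dif_neg, add_zero]
          rintro ⟨h1, h2, h3, h4⟩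
          exact hq ⟨h2, h1, h3.symm, by rw [Finset.insert_comm]; exact h4⟩
      · rintro ⟨v, u⟩ - hf
        dsimp only
        intro he
        have hvu : u = v := congrArg Prod.fst he
        apply hf
        rw [dif_neg]
        rintro ⟨h1, h2, h3, h4⟩
        exact h3 hvu.symm

lemma descent {n s : ℕ} (m : Fin s → (Fin n → ℕ)) (F : Finset (Fin s))
    (hrooted : ∀ T ⊆ F, T.Nonempty → ∃ i₀ ∈ T, ∀ j, m j ≤ T.sup m → i₀ ≤ j)
    (hmax : ∀ l ∉ F,
      ¬∀ T ⊆ insert l F, T.Nonempty → ∃ i₀ ∈ T, ∀ j, m j ≤ T.sup m → i₀ ≤ j) :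
    ∀ v : Fin s, v ∉ F → m v ≤ F.sup m →
      ∃ j ∈ F, j < v ∧ m j ≤ m v ⊔ (F.filter (fun i => j < i)).sup m := by
  intro v
  induction v using WellFoundedLT.induction with
  | _ v IH =>
  intro hvF hvq
  have h := hmax v hvF
  push_neg at h
  obtain ⟨V, hVsub, hVne, hVbad⟩ := h
  set S : Finset (Fin s) := Finset.univ.filter (fun j => m j ≤ V.sup m) with hS
  have hSne : S.Nonempty := by
    obtain ⟨i, hi⟩ := hVne
    exact ⟨i, by simp [hS, Finset.le_sup hi]⟩
  set b := S.min' hSne with hb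
  have hbS : b ∈ S := Finset.min'_mem _ _
  have hbdvd : m b ≤ V.sup m := (Finset.mem_filter.mp hbS).2
  have hbV : b ∉ V := by
    intro hbVmem
    obtain ⟨j', hj'dvd, hj'lt⟩ := hVbad b hbVmem
    have : b ≤ j' := Finset.min'_le _ _ (by simp [hS, hj'dvd])
    exact absurd this (not_le.mpr hj'lt)
  have hVF : ¬ V ⊆ F := by
    intro hVF
    obtain ⟨i₀, hi₀V, hi₀⟩ := hrooted V hVF hVne
    obtain ⟨j', hj'dvd, hj'lt⟩ := hVbad i₀ hi₀V
    exact absurd (hi₀ j' hj'dvd) (not_le.mpr hj'lt)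
  have hvV : v ∈ V := by
    by_contra hvV
    exact hVF (fun x hx => by
      rcases Finset.mem_insert.mp (hVsub hx) with h | h
      · exact absurd (h ▸ hx) hvV
      · exact h)
  have hble : ∀ i ∈ V, b ≤ i := fun i hi =>
    Finset.min'_le _ _ (by simp [hS, Finset.le_sup hi])
  have hbv : b < v := lt_of_le_of_ne (hble v hvV) (fun e => hbV (e ▸ hvV))
  have hVsup : V.sup m ≤ m v ⊔ (F.filter (fun i => b < i)).sup m := by
    refine Finset.sup_le fun i hi => ?_
    rcases Finset.mem_insert.mp (hVsub hi) with h | h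
    · exact h ▸ le_sup_left
    · refine le_trans (Finset.le_sup (f := m) ?_) le_sup_right
      refine Finset.mem_filter.mpr ⟨h, ?_⟩
      exact lt_of_le_of_ne (hble i hi) (fun e => hbV (e ▸ hi))
  by_cases hbF : b ∈ F
  · exact ⟨b, hbF, hbv, le_trans hbdvd hVsup⟩
  · have hbq : m b ≤ F.sup m := by
      refine le_trans hbdvd (Finset.sup_le fun i hi => ?_)
      rcases Finset.mem_insert.mp (hVsub hi) with h | h
      · exact h ▸ hvq
      · exact Finset.le_sup h
    obtain ⟨j, hjF, hjb, hjle⟩ := IH b hbv hbF hbq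
    refine ⟨j, hjF, lt_trans hjb hbv, ?_⟩
    have hsub : F.filter (fun i => b < i) ⊆ F.filter (fun i => j < i) := by
      intro i hi
      have := Finset.mem_filter.mp hi
      exact Finset.mem_filter.mpr ⟨this.1, lt_trans hjb this.2⟩
    calc m j ≤ m b ⊔ (F.filter (fun i => j < i)).sup m := hjle
      _ ≤ (m v ⊔ (F.filter (fun i => b < i)).sup m) ⊔ (F.filter (fun i => j < i)).sup m := by
          exact sup_le_sup_right (le_trans hbdvd hVsup) _
      _ ≤ m v ⊔ (F.filter (fun i => j < i)).sup m := by
          rw [sup_assoc]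
          exact sup_le_sup_left (sup_le (Finset.sup_mono hsub) le_rfl) _

noncomputable def rhoBar {n s : ℕ} (m : Fin s → (Fin n → ℕ)) (F : Finset (Fin s))
    (j₀ : Fin s) : Fin s → Fin s := fun v =>
  if v ∈ F then v
  else if h : ∃ j, j ∈ F ∧ j < v ∧ m j ≤ m v ⊔ (F.filter (fun i => j < i)).sup m
    then h.choose else j₀

lemma rhoBar_mem {n s : ℕ} (m : Fin s → (Fin n → ℕ)) (F : Finset (Fin s)) (j₀ : Fin s)
    (hj₀ : j₀ ∈ F) (v : Fin s) : rhoBar m F j₀ v ∈ F := by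
  unfold rhoBar
  split
  · assumption
  · split
    · next h => exact h.choose_spec.1
    · exact hj₀

lemma rhoBar_id {n s : ℕ} (m : Fin s → (Fin n → ℕ)) (F : Finset (Fin s)) (j₀ : Fin s)
    (v : Fin s) (hv : v ∈ F) : rhoBar m F j₀ v = v := by
  unfold rhoBar; rw [if_pos hv]

lemma rhoBar_inj_sup {n s : ℕ} (m : Fin s → (Fin n → ℕ)) (F : Finset (Fin s)) (j₀ : Fin s)
    (hdesc : ∀ v : Fin s, v ∉ F → m v ≤ F.sup m →
      ∃ j ∈ F, j < v ∧ m j ≤ m v ⊔ (F.filter (fun i => j < i)).sup m)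
    (hj₀ : j₀ ∈ F) (hFne : F.Nonempty)
    (G : Finset (Fin s)) (hGq : G.sup m ≤ F.sup m) (hGc : G.card = F.card)
    (hinj : Set.InjOn (rhoBar m F j₀) G) : F.sup m ≤ G.sup m := by
  have himg : G.image (rhoBar m F j₀) = F := by
    apply Finset.eq_of_subset_of_card_le
    · intro x hx
      obtain ⟨v, hv, rfl⟩ := Finset.mem_image.mp hx
      exact rhoBar_mem m F j₀ hj₀ v
    · rw [Finset.card_image_of_injOn hinj, hGc]
  intro x
  show (F.sup m) x ≤ (G.sup m) x
  by_cases hq0 : (F.sup m) x = 0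
  · simp [hq0]
  have hsx : (F.sup m) x = F.sup (fun j => (m j) x) := Finset.sup_apply F m x
  set Fx : Finset (Fin s) := F.filter (fun j => (m j) x = (F.sup m) x) with hFx
  have hFxne : Fx.Nonempty := by
    obtain ⟨i, hiF, hieq⟩ := Finset.exists_mem_eq_sup F hFne (fun j => (m j) x)
    exact ⟨i, Finset.mem_filter.mpr ⟨hiF, by rw [hsx, hieq]⟩⟩
  set j₁ := Fx.max' hFxne with hj₁
  have hj₁mem : j₁ ∈ Fx := Finset.max'_mem _ _
  have hj₁F : j₁ ∈ F := (Finset.mem_filter.mp hj₁mem).1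
  have hj₁x : (m j₁) x = (F.sup m) x := (Finset.mem_filter.mp hj₁mem).2
  have : j₁ ∈ G.image (rhoBar m F j₀) := by rw [himg]; exact hj₁F
  obtain ⟨v, hvG, hvj₁⟩ := Finset.mem_image.mp this
  have hvsup : (m v) x ≤ (G.sup m) x := by
    have := Finset.le_sup (f := m) hvG
    exact this x
  by_cases hvF : v ∈ F
  · rw [rhoBar_id m F j₀ v hvF] at hvj₁
    subst hvj₁
    rw [← hj₁x]
    exact hvsup
  · have hvq : m v ≤ F.sup m := le_trans (Finset.le_sup hvG) hGq
    have hex : ∃ j, j ∈ F ∧ j < v ∧ m j ≤ m v ⊔ (F.filter (fun i => j < i)).sup m := by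
      obtain ⟨j, h1, h2, h3⟩ := hdesc v hvF hvq
      exact ⟨j, h1, h2, h3⟩
    have hrho : rhoBar m F j₀ v = hex.choose := by
      unfold rhoBar
      rw [if_neg hvF, dif_pos hex]
    have hspec := hex.choose_spec
    rw [hrho] at hvj₁
    rw [hvj₁] at hspec
    obtain ⟨-, -, hdvd⟩ := hspec
    have hx := hdvd x
    have htail : ((F.filter (fun i => j₁ < i)).sup m) x < (F.sup m) x := by
      rw [Finset.sup_apply]
      refine Finset.sup_lt_iff (Nat.pos_of_ne_zero hq0) |>.mpr fun i hi => ?_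
      obtain ⟨hiF, hij₁⟩ := Finset.mem_filter.mp hi
      have hle : (m i) x ≤ (F.sup m) x := (Finset.le_sup (f := m) hiF) x
      refine lt_of_le_of_ne hle fun heq => ?_
      have : i ∈ Fx := Finset.mem_filter.mpr ⟨hiF, heq⟩
      exact absurd (Finset.le_max' _ _ this) (not_le.mpr hij₁)
    have hsup : (m v ⊔ (F.filter (fun i => j₁ < i)).sup m) x
        = max ((m v) x) (((F.filter (fun i => j₁ < i)).sup m) x) := rfl
    rw [hj₁x, hsup] at hx
    rcases max_cases ((m v) x) (((F.filter (fun i => j₁ < i)).sup m) x) with ⟨he, -⟩ | ⟨he, -⟩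
    · rw [he] at hx; exact le_trans hx hvsup
    · rw [he] at hx; exact absurd (lt_of_le_of_lt hx htail) (lt_irrefl _)

noncomputable def detD {s i : ℕ} (ρ : Fin s → Fin s) (Fe : Finset (Fin s))
    (hFe : Fe.card = i + 1) (τ : Finset (Fin s)) (hτ : τ.card = i + 1) : k :=
  (Matrix.of fun r c : Fin (i + 1) =>
    if ρ (τ.orderEmbOfFin hτ r) = Fe.orderEmbOfFin hFe c then (1 : k) else 0).det

lemma detD_zero_row {s i : ℕ} (ρ : Fin s → Fin s) (Fe : Finset (Fin s))
    (hFe : Fe.card = i + 1)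
    (τ : Finset (Fin s)) (hτ : τ.card = i + 1) {x : Fin s} (hx : x ∈ τ) (hρx : ρ x ∉ Fe) :
    (detD ρ Fe hFe τ hτ : k) = 0 := by
  have hrange := Finset.range_orderEmbOfFin τ hτ
  have : (x : Fin s) ∈ Set.range (τ.orderEmbOfFin hτ) := by rw [hrange]; exact hx
  obtain ⟨r, hr⟩ := this
  apply Matrix.det_eq_zero_of_row_eq_zero r
  intro c
  simp only [Matrix.of_apply]
  rw [hr, if_neg]
  intro he
  exact hρx (he ▸ Finset.orderEmbOfFin_mem Fe hFe c)

lemma detD_id {s i : ℕ} (ρ : Fin s → Fin s) (Fe : Finset (Fin s)) (hFe : Fe.card = i + 1)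
    (hid : ∀ x ∈ Fe, ρ x = x) : (detD ρ Fe hFe Fe hFe : k) = 1 := by
  have : (Matrix.of fun r c : Fin (i + 1) =>
      if ρ (Fe.orderEmbOfFin hFe r) = Fe.orderEmbOfFin hFe c then (1 : k) else 0) = 1 := by
    ext r c
    simp only [Matrix.of_apply, Matrix.one_apply]
    rw [hid _ (Finset.orderEmbOfFin_mem Fe hFe r)]
    by_cases h : r = c
    · rw [if_pos (by rw [h]), if_pos h]
    · rw [if_neg (fun he => h ((Fe.orderEmbOfFin hFe).injective he)), if_neg h]
  rw [detD, this, Matrix.det_one]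

lemma erase_orderEmb {s i : ℕ} (σ : Finset (Fin s)) (hσ : σ.card = i + 2) (r : Fin (i + 2)) :
    ∀ r' : Fin (i + 1),
      (σ.erase (σ.orderEmbOfFin hσ r)).orderEmbOfFin
        (by rw [Finset.card_erase_of_mem (Finset.orderEmbOfFin_mem σ hσ r), hσ]; rfl) r'
      = σ.orderEmbOfFin hσ (r.succAbove r') := by
  have h := Finset.orderEmbOfFin_unique
    (s := σ.erase (σ.orderEmbOfFin hσ r))
    (by rw [Finset.card_erase_of_mem (Finset.orderEmbOfFin_mem σ hσ r), hσ]; rfl :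
       (σ.erase (σ.orderEmbOfFin hσ r)).card = i + 1)
    (f := fun r' => σ.orderEmbOfFin hσ (r.succAbove r')) ?_ ?_
  · intro r'
    exact (congrFun h r').symm
  · intro r'
    refine Finset.mem_erase.mpr ⟨?_, Finset.orderEmbOfFin_mem σ hσ _⟩
    exact fun he => Fin.succAbove_ne r r' ((σ.orderEmbOfFin hσ).injective he)
  · exact fun a b hab => (σ.orderEmbOfFin hσ).strictMono ((Fin.strictMono_succAbove r) hab)

lemma detD_alternating {s i : ℕ} (ρ : Fin s → Fin s) (Fe : Finset (Fin s))
    (hFe : Fe.card = i + 1)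
    (σ : Finset (Fin s)) (hσ : σ.card = i + 2) (hnoninj : ¬ Set.InjOn ρ ↑σ) :
    ∑ r : Fin (i + 2), (-1 : k) ^ (r : ℕ) *
      detD ρ Fe hFe (σ.erase (σ.orderEmbOfFin hσ r))
        (by rw [Finset.card_erase_of_mem (Finset.orderEmbOfFin_mem σ hσ r), hσ]; rfl) = 0 := by
  set N : Matrix (Fin (i + 2)) (Fin (i + 2)) k :=
    Matrix.of fun r => Fin.cons (1 : k)
      (fun c => if ρ (σ.orderEmbOfFin hσ r) = Fe.orderEmbOfFin hFe c then (1 : k) else 0)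
    with hN
  have hdet0 : N.det = 0 := by
    simp only [Set.InjOn, not_forall] at hnoninj
    obtain ⟨a, ha, b, hb, hab, hne⟩ := hnoninj
    have hra : (a : Fin s) ∈ Set.range (σ.orderEmbOfFin hσ) := by
      rw [Finset.range_orderEmbOfFin]; exact ha
    have hrb : (b : Fin s) ∈ Set.range (σ.orderEmbOfFin hσ) := by
      rw [Finset.range_orderEmbOfFin]; exact hb
    obtain ⟨ra, hra⟩ := hra
    obtain ⟨rb, hrb⟩ := hrb
    refine Matrix.det_zero_of_row_eq (i := ra) (j := rb)
      (fun he => hne (by rw [← hra, ← hrb, he])) ?_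
    funext c
    refine Fin.cases ?_ ?_ c
    · simp [hN]
    · intro c'
      simp only [hN, Matrix.of_apply, Fin.cons_succ]
      rw [hra, hrb, hab]
  have hlap := Matrix.det_succ_column_zero N
  rw [hdet0] at hlap
  rw [show (0 : k) = -0 by ring] at hlap
  have hsum : ∑ r : Fin (i + 2), (-1 : k) ^ (r : ℕ) *
      detD ρ Fe hFe (σ.erase (σ.orderEmbOfFin hσ r))
        (by rw [Finset.card_erase_of_mem (Finset.orderEmbOfFin_mem σ hσ r), hσ]; rfl)
      = ∑ r : Fin (i + 2), (-1 : k) ^ (r : ℕ) * N r 0 * (N.submatrix r.succAbove Fin.succ).det := by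
    refine Finset.sum_congr rfl fun r _ => ?_
    have h0 : N r 0 = 1 := by simp [hN]
    rw [h0, mul_one]
    congr 1
    unfold detD
    congr 1
    ext r' c
    simp only [Matrix.of_apply, Matrix.submatrix_apply, hN]
    rw [show (Fin.succ c) = (c.succ) from rfl]
    rw [Fin.cons_succ]
    rw [erase_orderEmb σ hσ r r']
  rw [hsum, hlap.symm]
  ring

lemma filter_erase_lt {s : ℕ} (σ : Finset (Fin s)) (v : Fin s) :
    (σ.erase v).filter (· < v) = σ.filter (· < v) := by
  ext x
  simp only [Finset.mem_filter, Finset.mem_erase]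
  exact ⟨fun ⟨⟨_, h2⟩, h3⟩ => ⟨h2, h3⟩, fun ⟨h1, h2⟩ => ⟨⟨ne_of_lt h2, h1⟩, h2⟩⟩

lemma card_filter_lt_orderEmb {s c : ℕ} (σ : Finset (Fin s)) (hσ : σ.card = c) (r : Fin c) :
    (σ.filter (· < σ.orderEmbOfFin hσ r)).card = r := by
  have himg : σ.filter (· < σ.orderEmbOfFin hσ r)
      = (Finset.univ.filter (fun t : Fin c => t < r)).image (σ.orderEmbOfFin hσ) := by
    ext x
    simp only [Finset.mem_filter, Finset.mem_image, Finset.mem_univ, true_and]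
    constructor
    · rintro ⟨hxσ, hlt⟩
      have : x ∈ Set.range (σ.orderEmbOfFin hσ) := by
        rw [Finset.range_orderEmbOfFin]; exact hxσ
      obtain ⟨t, rfl⟩ := this
      exact ⟨t, (σ.orderEmbOfFin hσ).lt_iff_lt.mp hlt, rfl⟩
    · rintro ⟨t, htr, rfl⟩
      exact ⟨Finset.orderEmbOfFin_mem σ hσ t, (σ.orderEmbOfFin hσ).lt_iff_lt.mpr htr⟩
  rw [himg, Finset.card_image_of_injective _ (σ.orderEmbOfFin hσ).injective]
  have : Finset.univ.filter (fun t : Fin c => t < r) = Finset.Iio r := by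
    ext t; simp
  rw [this, Fin.card_Iio]

lemma image_orderEmb {s c : ℕ} (σ : Finset (Fin s)) (hσ : σ.card = c) :
    Finset.univ.image (σ.orderEmbOfFin hσ) = σ := by
  apply Finset.coe_injective
  rw [Finset.coe_image, Finset.coe_univ, Set.image_univ, Finset.range_orderEmbOfFin]

end BarileAux

/-- Barile's criterion.  Let `I` be a monomial ideal of `S = k[x_1, ..., x_n]` whose
minimal generators are the monomials with exponent vectors `m 0, ..., m (s-1)`, totally
ordered by the index order (so `m` is an antichain under divisibility).  Suppose the set
`F` of generators is a facet of the Lyubeznik simplicial complex, i.e. `F` is rooted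
(for every nonempty `T ⊆ F`, the least-index generator dividing `lcm(T)` lies in `T`)
and no strictly larger set is rooted, and that omitting any generator of `F` strictly
decreases the lcm.  Then the multigraded Betti number `b_{|F|, q}(S/I)` is nonzero,
where `q = lcm(F)` (lcms of exponent vectors are pointwise suprema). -/
theorem lyubeznik_facet_gives_nonzero_betti (k : Type) [Field k] (n s : ℕ)
    (m : Fin s → (Fin n → ℕ)) (hmin : ∀ i j, m i ≤ m j → i = j)
    (F : Finset (Fin s))
    (hrooted : ∀ T ⊆ F, T.Nonempty → ∃ i₀ ∈ T, ∀ j, m j ≤ T.sup m → i₀ ≤ j)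
    (hmax : ∀ l ∉ F,
      ¬∀ T ⊆ insert l F, T.Nonempty → ∃ i₀ ∈ T, ∀ j, m j ≤ T.sup m → i₀ ≤ j)
    (hlcm : ∀ j ∈ F, (F.erase j).sup m ≠ F.sup m) :
    bettiOfTaylor k s (fun σ => σ.sup m ≤ F.sup m ∧ σ.sup m ≠ F.sup m) F.card ≠ 0 := by
  classical
  set P : Finset (Fin s) → Prop := fun σ => σ.sup m ≤ F.sup m ∧ σ.sup m ≠ F.sup m with hPdef
  have Pmono : ∀ {a b : Finset (Fin s)}, a ⊆ b → P b → P a := by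
    rintro a b hab ⟨h1, h2⟩
    have hle : a.sup m ≤ b.sup m := Finset.sup_mono hab
    exact ⟨le_trans hle h1, fun he => h2 (le_antisymm h1 (by rw [← he]; exact hle))⟩
  rcases hcc : F.card with _ | (_ | i)
  · -- F.card = 0
    have hF : F = ∅ := Finset.card_eq_zero.mp hcc
    show bettiOfTaylor k s P 0 ≠ 0
    simp only [bettiOfTaylor]
    rw [if_neg]
    · exact one_ne_zero
    · rintro ⟨-, h2⟩
      exact h2 (by rw [hF])
  · -- F.card = 1
    obtain ⟨t, hFt⟩ := Finset.card_eq_one.mp hcc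
    have htF : t ∈ F := by rw [hFt]; exact Finset.mem_singleton_self t
    have hsupt : F.sup m = m t := by rw [hFt]; exact Finset.sup_singleton
    have hP0 : P ∅ := by
      refine ⟨by simp, ?_⟩
      have := hlcm t htF
      rw [hFt, Finset.erase_singleton] at this
      rw [hFt]
      exact this
    show bettiOfTaylor k s P 1 ≠ 0
    simp only [bettiOfTaylor]
    have hempty : IsEmpty {σ : Finset (Fin s) // P σ ∧ σ.card = 1} := by
      refine ⟨?_⟩
      rintro ⟨σ, ⟨hP1, hP2⟩, hc1⟩
      obtain ⟨v, hv⟩ := Finset.card_eq_one.mp hc1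
      rw [hv, Finset.sup_singleton] at hP1 hP2
      rw [hsupt] at hP1
      have hvt : v = t := hmin v t hP1
      rw [hvt, ← hsupt] at hP2
      exact hP2 rfl
    have hzero : taylorBd k s P 0 = 0 := by
      apply LinearMap.ext; intro f
      have hf : f = 0 := funext fun x => (hempty.false x).elim
      rw [hf, map_zero]; rfl
    rw [hzero, LinearMap.range_zero, finrank_bot]
    haveI : Unique {σ : Finset (Fin s) // P σ ∧ σ.card = 0} := by
      refine ⟨⟨⟨∅, hP0, Finset.card_empty⟩⟩, ?_⟩
      rintro ⟨σ, hσ, hc⟩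
      exact Subtype.ext (Finset.card_eq_zero.mp hc)
    haveI : Fintype {σ : Finset (Fin s) // P σ ∧ σ.card = 0} := Fintype.ofFinite _
    have h1 : Module.finrank k (TaylorChain k s P 0) = 1 :=
      (Module.finrank_pi (ι := {σ : Finset (Fin s) // P σ ∧ σ.card = 0}) k).trans
        Fintype.card_unique
    rw [h1]
    omega
  · -- F.card = i + 2
    have hi : F.card = i + 2 := hcc
    show bettiOfTaylor k s P (i + 2) ≠ 0
    simp only [bettiOfTaylor]
    have hFne : F.Nonempty := Finset.card_pos.mp (by rw [hi]; omega)
    obtain ⟨j₀, hj₀⟩ := hFne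
    set Fe := F.erase j₀ with hFedef
    have hFec : Fe.card = i + 1 := by
      rw [hFedef, Finset.card_erase_of_mem hj₀, hi]; rfl
    have hdesc := descent m F hrooted hmax
    set ρ := rhoBar m F j₀ with hρdef
    have hρmem : ∀ v, ρ v ∈ F := rhoBar_mem m F j₀ hj₀
    have hρid : ∀ v ∈ F, ρ v = v := fun v hv => rhoBar_id m F j₀ v hv
    have hnoninj : ∀ (G : Finset (Fin s)), P G → G.card = i + 2 → ¬ Set.InjOn ρ ↑G := by
      intro G hG hGc hinj
      have := rhoBar_inj_sup m F j₀ hdesc hj₀ ⟨j₀, hj₀⟩ G hG.1 (by rw [hGc, hi]) hinj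
      exact hG.2 (le_antisymm hG.1 this)
    haveI : Fintype {σ : Finset (Fin s) // P σ ∧ σ.card = i + 1} := Fintype.ofFinite _
    haveI : Fintype {σ : Finset (Fin s) // P σ ∧ σ.card = i + 2} := Fintype.ofFinite _
    have hPerase : ∀ j ∈ F, P (F.erase j) := fun j hj =>
      ⟨Finset.sup_mono (Finset.erase_subset j F), hlcm j hj⟩
    set τ₀ : {σ : Finset (Fin s) // P σ ∧ σ.card = i + 1} :=
      ⟨Fe, hPerase j₀ hj₀, hFec⟩ with hτ₀def
    -- the cycle z = ∂F
    set z : TaylorChain k s P (i + 1) := fun τ =>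
      if τ.1 ⊆ F then ∑ j ∈ F \ τ.1, (-1 : k) ^ ((τ.1.filter (· < j)).card) else 0 with hzdef
    have hzτ₀ : z τ₀ = (-1 : k) ^ ((Fe.filter (· < j₀)).card) := by
      show (if Fe ⊆ F then ∑ j ∈ F \ Fe, (-1 : k) ^ ((Fe.filter (· < j)).card) else 0) = _
      rw [if_pos (Finset.erase_subset j₀ F), Finset.sdiff_erase_self hj₀,
        Finset.sum_singleton]
    have hzne : z τ₀ ≠ 0 := by
      rw [hzτ₀]; exact pow_ne_zero _ (by norm_num)
    -- z is a cycle
    have hzker : taylorBd k s P i z = 0 := by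
      funext τ
      show (∑ v : Fin s, _) = (0 : k)
      by_cases hτF : τ.1 ⊆ F
      · -- τ ⊆ F : exactly two missing generators, with cancelling signs
        have hcard2 : (F \ τ.1).card = 2 := by
          rw [Finset.card_sdiff_of_subset hτF, τ.2.2, hi]
          omega
        obtain ⟨a', b', hab', hset'⟩ := Finset.card_eq_two.mp hcard2
        have hwlog : ∃ a b : Fin s, a < b ∧ F \ τ.1 = {a, b} := by
          rcases lt_or_gt_of_ne hab' with h | h
          exacts [⟨a', b', h, hset'⟩, ⟨b', a', h, by rw [hset', Finset.pair_comm]⟩]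
        obtain ⟨a, b, haltb, hset⟩ := hwlog
        have hane : a ≠ b := ne_of_lt haltb
        have haFd : a ∈ F \ τ.1 := by rw [hset]; exact Finset.mem_insert_self a {b}
        have hbFd : b ∈ F \ τ.1 := by
          rw [hset]; exact Finset.mem_insert_of_mem (Finset.mem_singleton_self b)
        have haF : a ∈ F := (Finset.mem_sdiff.mp haFd).1
        have haτ : a ∉ τ.1 := (Finset.mem_sdiff.mp haFd).2
        have hbF : b ∈ F := (Finset.mem_sdiff.mp hbFd).1
        have hbτ : b ∉ τ.1 := (Finset.mem_sdiff.mp hbFd).2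
        have hPins : ∀ v w : Fin s, v ∈ F \ τ.1 → w ∈ F \ τ.1 → v ≠ w →
            P (insert v τ.1) := by
          intro v w hv hw hvw
          have hvF := (Finset.mem_sdiff.mp hv).1
          have hwF := (Finset.mem_sdiff.mp hw).1
          have hwτ := (Finset.mem_sdiff.mp hw).2
          have hsubw : insert v τ.1 ⊆ F.erase w := by
            intro x hx
            rcases Finset.mem_insert.mp hx with h | h
            · exact Finset.mem_erase.mpr ⟨h ▸ hvw, h ▸ hvF⟩
            · exact Finset.mem_erase.mpr ⟨fun e => hwτ (e ▸ h), hτF h⟩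
          have hle : (insert v τ.1).sup m ≤ (F.erase w).sup m := Finset.sup_mono hsubw
          have hle2 : (F.erase w).sup m ≤ F.sup m := Finset.sup_mono (Finset.erase_subset w F)
          refine ⟨le_trans hle hle2, fun he => hlcm w hwF ?_⟩
          exact le_antisymm hle2 (by rw [← he]; exact hle)
        have key : ∀ v w : Fin s, v ∈ F \ τ.1 → w ∈ F \ τ.1 → v ≠ w →
            ∀ (hg : v ∉ τ.1 ∧ P (insert v τ.1)),
            z ⟨insert v τ.1, hg.2, by
              rw [Finset.card_insert_of_notMem hg.1, τ.2.2]⟩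
            = (-1 : k) ^ (((insert v τ.1).filter (· < w)).card) := by
          intro v w hv hw hvw hg
          have hvF := (Finset.mem_sdiff.mp hv).1
          show (if insert v τ.1 ⊆ F then
              ∑ j ∈ F \ insert v τ.1, (-1 : k) ^ (((insert v τ.1).filter (· < j)).card)
            else 0) = _
          rw [if_pos (Finset.insert_subset hvF hτF)]
          have hsd : F \ insert v τ.1 = {w} := by
            rw [Finset.sdiff_insert, hset]
            rcases Finset.mem_insert.mp (by rw [← hset]; exact hv) with h | h
            · -- v = a, so w = b
              have hw' : w = b := by
                rcases Finset.mem_insert.mp (by rw [← hset]; exact hw) with h2 | h2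
                · exact absurd (h.trans h2.symm) hvw
                · exact Finset.mem_singleton.mp h2
              rw [h, hw', Finset.erase_insert (by simp [hane])]
            · have h' : v = b := Finset.mem_singleton.mp h
              have hw' : w = a := by
                rcases Finset.mem_insert.mp (by rw [← hset]; exact hw) with h2 | h2
                · exact h2
                · exact absurd (h'.trans (Finset.mem_singleton.mp h2).symm) hvw
              rw [h', hw', Finset.pair_comm, Finset.erase_insert (by simp [hane.symm])]
          rw [hsd, Finset.sum_singleton]
        refine (Finset.sum_subset (Finset.subset_univ ({a, b} : Finset (Fin s))) ?_).symm.trans ?_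
        · intro v _ hv
          split
          · next hg =>
            have hz0 : z ⟨insert v τ.1, hg.2, by
                rw [Finset.card_insert_of_notMem hg.1, τ.2.2]⟩ = 0 := by
              show (if insert v τ.1 ⊆ F then _ else (0:k)) = 0
              rw [if_neg]
              intro hsub
              have : v ∈ F \ τ.1 :=
                Finset.mem_sdiff.mpr ⟨hsub (Finset.mem_insert_self v τ.1), hg.1⟩
              rw [hset] at this
              exact hv this
            rw [hz0, mul_zero]
          · rfl
        · rw [Finset.sum_pair hane]
          have hga : a ∉ τ.1 ∧ P (insert a τ.1) := ⟨haτ, hPins a b haFd hbFd hane⟩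
          have hgb : b ∉ τ.1 ∧ P (insert b τ.1) := ⟨hbτ, hPins b a hbFd haFd hane.symm⟩
          rw [dif_pos hga, dif_pos hgb]
          rw [key a b haFd hbFd hane hga, key b a hbFd haFd hane.symm hgb]
          rw [filter_insert_card haτ (u := b), filter_insert_card hbτ (u := a)]
          rw [if_pos haltb, if_neg (not_lt_of_gt haltb)]
          rw [pow_add, pow_one, add_zero]
          ring
      · refine Finset.sum_eq_zero fun v _ => ?_
        split
        · next hg =>
          have hz0 : z ⟨insert v τ.1, hg.2, by
              rw [Finset.card_insert_of_notMem hg.1, τ.2.2]⟩ = 0 := by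
            show (if insert v τ.1 ⊆ F then _ else (0:k)) = 0
            rw [if_neg (fun hsub => hτF (fun x hx => hsub (Finset.mem_insert_of_mem hx)))]
          rw [hz0, mul_zero]
        · rfl
    -- the determinant functional
    set D : {σ : Finset (Fin s) // P σ ∧ σ.card = i + 1} → k :=
      fun τ => detD ρ Fe hFec τ.1 τ.2.2 with hDdef
    have hφz : ∑ τ, D τ * z τ = z τ₀ := by
      rw [Finset.sum_eq_single τ₀]
      · have hDτ₀ : D τ₀ = 1 :=
          detD_id ρ Fe hFec (fun x hx => hρid x (Finset.mem_of_mem_erase hx))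
        rw [hDτ₀, one_mul]
      · intro τ _ hτne
        by_cases hsub : τ.1 ⊆ F
        · have hj₀τ : j₀ ∈ τ.1 := by
            by_contra hj₀τ
            have hsub' : τ.1 ⊆ Fe := fun x hx =>
              Finset.mem_erase.mpr ⟨fun e => hj₀τ (e ▸ hx), hsub hx⟩
            have : τ.1 = Fe := Finset.eq_of_subset_of_card_le hsub' (by rw [hFec, τ.2.2])
            exact hτne (Subtype.ext this)
          have hD0 : D τ = 0 := detD_zero_row ρ Fe hFec τ.1 τ.2.2 hj₀τ
            (by rw [hρid j₀ hj₀]; exact Finset.notMem_erase j₀ F)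
          rw [hD0, zero_mul]
        · have hz0 : z τ = 0 := by
            show (if τ.1 ⊆ F then _ else (0:k)) = 0
            rw [if_neg hsub]
          rw [hz0, mul_zero]
      · intro h; exact absurd (Finset.mem_univ τ₀) h
    -- the functional kills boundaries
    have hkill : ∀ (σ : {σ : Finset (Fin s) // P σ ∧ σ.card = i + 2}) (a : k),
        ∑ τ, D τ * (taylorBd k s P (i + 1) (Pi.single σ a)) τ = 0 := by
      intro σ a
      have step1 : ∀ τ : {σ' : Finset (Fin s) // P σ' ∧ σ'.card = i + 1},
          D τ * (taylorBd k s P (i + 1) (Pi.single σ a)) τ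
          = ∑ v : Fin s, (if h : v ∉ τ.1 ∧ P (insert v τ.1) then
              D τ * ((-1 : k) ^ ((τ.1.filter (· < v)).card) *
                (Pi.single σ a : TaylorChain k s P (i + 2)) ⟨insert v τ.1, h.2, by
                  rw [Finset.card_insert_of_notMem h.1, τ.2.2]⟩)
            else 0) := by
        intro τ
        show D τ * (∑ v : Fin s, _) = _
        rw [Finset.mul_sum]
        refine Finset.sum_congr rfl fun v _ => ?_
        by_cases h : v ∉ τ.1 ∧ P (insert v τ.1)
        · rw [dif_pos h, dif_pos h]
        · rw [dif_neg h, dif_neg h, mul_zero]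
      have inner0 : ∀ v : Fin s, v ∉ σ.1 →
          (∑ τ : {σ' : Finset (Fin s) // P σ' ∧ σ'.card = i + 1},
            (if h : v ∉ τ.1 ∧ P (insert v τ.1) then
              D τ * ((-1 : k) ^ ((τ.1.filter (· < v)).card) *
                (Pi.single σ a : TaylorChain k s P (i + 2)) ⟨insert v τ.1, h.2, by
                  rw [Finset.card_insert_of_notMem h.1, τ.2.2]⟩)
            else 0)) = 0 := by
        intro v hv
        refine Finset.sum_eq_zero fun τ _ => ?_
        split
        · next h =>
          have hne : (⟨insert v τ.1, h.2, by
              rw [Finset.card_insert_of_notMem h.1, τ.2.2]⟩ :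
              {σ' : Finset (Fin s) // P σ' ∧ σ'.card = i + 2}) ≠ σ := by
            intro he
            have : insert v τ.1 = σ.1 := congrArg Subtype.val he
            exact hv (this ▸ Finset.mem_insert_self v τ.1)
          rw [Pi.single_apply, if_neg hne, mul_zero, mul_zero]
        · rfl
      have innerval : ∀ r : Fin (i + 2),
          (∑ τ : {σ' : Finset (Fin s) // P σ' ∧ σ'.card = i + 1},
            (if h : (σ.1.orderEmbOfFin σ.2.2 r) ∉ τ.1 ∧ P (insert (σ.1.orderEmbOfFin σ.2.2 r) τ.1) then
              D τ * ((-1 : k) ^ ((τ.1.filter (· < (σ.1.orderEmbOfFin σ.2.2 r))).card) *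
                (Pi.single σ a : TaylorChain k s P (i + 2)) ⟨insert (σ.1.orderEmbOfFin σ.2.2 r) τ.1, h.2, by
                  rw [Finset.card_insert_of_notMem h.1, τ.2.2]⟩)
            else 0))
          = (-1 : k) ^ (r : ℕ) *
              detD ρ Fe hFec (σ.1.erase (σ.1.orderEmbOfFin σ.2.2 r))
                (by rw [Finset.card_erase_of_mem (Finset.orderEmbOfFin_mem σ.1 σ.2.2 r),
                  σ.2.2]; rfl) * a := by
        intro r
        set v := σ.1.orderEmbOfFin σ.2.2 r with hvdef
        have hv : v ∈ σ.1 := Finset.orderEmbOfFin_mem σ.1 σ.2.2 r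
        set τv : {σ' : Finset (Fin s) // P σ' ∧ σ'.card = i + 1} :=
          ⟨σ.1.erase v, Pmono (Finset.erase_subset v σ.1) σ.2.1, by
            rw [Finset.card_erase_of_mem hv, σ.2.2]; rfl⟩ with hτvdef
        rw [Finset.sum_eq_single τv]
        · have hg : v ∉ τv.1 ∧ P (insert v τv.1) :=
            ⟨Finset.notMem_erase v σ.1, by
              show P (insert v (σ.1.erase v))
              rw [Finset.insert_erase hv]; exact σ.2.1⟩
          rw [dif_pos hg]
          have hXeq : (⟨insert v τv.1, hg.2, by
              rw [Finset.card_insert_of_notMem hg.1, τv.2.2]⟩ :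
              {σ' : Finset (Fin s) // P σ' ∧ σ'.card = i + 2}) = σ :=
            Subtype.ext (Finset.insert_erase hv)
          rw [hXeq, Pi.single_eq_same]
          have hsign : ((τv.1.filter (· < v)).card) = (r : ℕ) := by
            show (((σ.1.erase v).filter (· < v)).card) = (r : ℕ)
            rw [filter_erase_lt, hvdef, card_filter_lt_orderEmb σ.1 σ.2.2 r]
          rw [hsign]
          have hDv : D τv = detD ρ Fe hFec (σ.1.erase v)
              (by rw [Finset.card_erase_of_mem (Finset.orderEmbOfFin_mem σ.1 σ.2.2 r),
                σ.2.2]; rfl) := rfl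
          rw [hDv]
          ring
        · intro τ' _ hτ'ne
          split
          · next h =>
            have hne : (⟨insert v τ'.1, h.2, by
                rw [Finset.card_insert_of_notMem h.1, τ'.2.2]⟩ :
                {σ' : Finset (Fin s) // P σ' ∧ σ'.card = i + 2}) ≠ σ := by
              intro he
              have hval : insert v τ'.1 = σ.1 := congrArg Subtype.val he
              have : τ'.1 = σ.1.erase v := by
                rw [← hval, Finset.erase_insert h.1]
              exact hτ'ne (Subtype.ext this)
            rw [Pi.single_apply, if_neg hne, mul_zero, mul_zero]
          · rfl
        · intro h; exact absurd (Finset.mem_univ τv) h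
      have halt := detD_alternating (k := k) ρ Fe hFec σ.1 σ.2.2
        (hnoninj σ.1 σ.2.1 σ.2.2)
      calc ∑ τ, D τ * (taylorBd k s P (i + 1) (Pi.single σ a)) τ
          = ∑ τ, ∑ v : Fin s, (if h : v ∉ τ.1 ∧ P (insert v τ.1) then
              D τ * ((-1 : k) ^ ((τ.1.filter (· < v)).card) *
                (Pi.single σ a : TaylorChain k s P (i + 2)) ⟨insert v τ.1, h.2, by
                  rw [Finset.card_insert_of_notMem h.1, τ.2.2]⟩)
            else 0) := Finset.sum_congr rfl fun τ _ => step1 τ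
        _ = ∑ v : Fin s, ∑ τ, (if h : v ∉ τ.1 ∧ P (insert v τ.1) then
              D τ * ((-1 : k) ^ ((τ.1.filter (· < v)).card) *
                (Pi.single σ a : TaylorChain k s P (i + 2)) ⟨insert v τ.1, h.2, by
                  rw [Finset.card_insert_of_notMem h.1, τ.2.2]⟩)
            else 0) := Finset.sum_comm
        _ = ∑ v ∈ σ.1, ∑ τ, (if h : v ∉ τ.1 ∧ P (insert v τ.1) then
              D τ * ((-1 : k) ^ ((τ.1.filter (· < v)).card) *
                (Pi.single σ a : TaylorChain k s P (i + 2)) ⟨insert v τ.1, h.2, by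
                  rw [Finset.card_insert_of_notMem h.1, τ.2.2]⟩)
            else 0) :=
            (Finset.sum_subset (Finset.subset_univ σ.1)
              (fun v _ hv => inner0 v hv)).symm
        _ = ∑ r : Fin (i + 2), ∑ τ,
            (if h : (σ.1.orderEmbOfFin σ.2.2 r) ∉ τ.1 ∧
                P (insert (σ.1.orderEmbOfFin σ.2.2 r) τ.1) then
              D τ * ((-1 : k) ^ ((τ.1.filter (· < (σ.1.orderEmbOfFin σ.2.2 r))).card) *
                (Pi.single σ a : TaylorChain k s P (i + 2)) ⟨insert (σ.1.orderEmbOfFin σ.2.2 r) τ.1, h.2, by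
                  rw [Finset.card_insert_of_notMem h.1, τ.2.2]⟩)
            else 0) :=
            (Finset.sum_congr (image_orderEmb σ.1 σ.2.2).symm (fun _ _ => rfl)).trans
              (Finset.sum_image
                (fun x _ y _ h => (σ.1.orderEmbOfFin σ.2.2).injective h))
        _ = ∑ r : Fin (i + 2), (-1 : k) ^ (r : ℕ) *
              detD ρ Fe hFec (σ.1.erase (σ.1.orderEmbOfFin σ.2.2 r))
                (by rw [Finset.card_erase_of_mem (Finset.orderEmbOfFin_mem σ.1 σ.2.2 r),
                  σ.2.2]; rfl) * a :=
            Finset.sum_congr rfl fun r _ => innerval r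
        _ = (∑ r : Fin (i + 2), (-1 : k) ^ (r : ℕ) *
              detD ρ Fe hFec (σ.1.erase (σ.1.orderEmbOfFin σ.2.2 r))
                (by rw [Finset.card_erase_of_mem (Finset.orderEmbOfFin_mem σ.1 σ.2.2 r),
                  σ.2.2]; rfl)) * a := (Finset.sum_mul _ _ _).symm
        _ = 0 * a := by rw [halt]
        _ = 0 := zero_mul a
    have hφbd : ∀ w : TaylorChain k s P (i + 2),
        ∑ τ, D τ * (taylorBd k s P (i + 1) w) τ = 0 := by
      intro w
      have hw : w = ∑ σ : {σ : Finset (Fin s) // P σ ∧ σ.card = i + 2},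
          Pi.single σ (w σ) := (Finset.univ_sum_single w).symm
      rw [hw, map_sum]
      calc ∑ τ, D τ * (∑ σ, taylorBd k s P (i + 1) (Pi.single σ (w σ))) τ
          = ∑ τ, ∑ σ, D τ * (taylorBd k s P (i + 1) (Pi.single σ (w σ))) τ := by
            refine Finset.sum_congr rfl fun τ _ => ?_
            rw [Finset.sum_apply, Finset.mul_sum]
        _ = ∑ σ, ∑ τ, D τ * (taylorBd k s P (i + 1) (Pi.single σ (w σ))) τ :=
            Finset.sum_comm
        _ = 0 := Finset.sum_eq_zero fun σ _ => hkill σ (w σ)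
    -- conclude
    have hznotrange : z ∉ LinearMap.range (taylorBd k s P (i + 1)) := by
      rintro ⟨w, hw⟩
      have h0 := hφbd w
      rw [hw, hφz] at h0
      exact hzne h0
    have hrange_le_ker : LinearMap.range (taylorBd k s P (i + 1))
        ≤ LinearMap.ker (taylorBd k s P i) := by
      rintro y ⟨f, rfl⟩
      exact LinearMap.mem_ker.mpr (taylor_bd_bd k s P Pmono i f)
    have hzker' : z ∈ LinearMap.ker (taylorBd k s P i) := LinearMap.mem_ker.mpr hzker
    have hlt : LinearMap.range (taylorBd k s P (i + 1))
        < LinearMap.ker (taylorBd k s P i) :=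
      lt_of_le_of_ne hrange_le_ker
        (fun he => hznotrange (by rw [he]; exact hzker'))
    haveI : FiniteDimensional k (TaylorChain k s P (i + 1)) := by
      infer_instance
    have hfr := Submodule.finrank_lt_finrank_of_lt hlt
    omega
end

section
/- Let Γ be a simplicial complex on vertex set {x_1, ..., x_n}, let m be a squarefree monomial, and suppose the induced subcollection Γ_m (facets of Γ whose vertices all divide m) has a well ordered facet cover of cardinality i. Then the multigraded Betti number b_{i,m}(S/F(Γ)) of the quotient by the facet ideal F(Γ) is nonzero. -/
open Classical

variable {α : Type*} [DecidableEq α]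

/-- The induced subcollection of `Γ` on a vertex subset `A`: the facets contained in `A`. -/
def inducedSub (Γ : Finset (Finset α)) (A : Finset α) : Finset (Finset α) :=
  Γ.filter (· ⊆ A)

/-- The multigraded Betti number `b_{i,m}(S/F(Γ))` for the facet ideal `F(Γ)` of the
simplicial complex with facet set `Γ`, in the squarefree multidegree `m`: the generators of
`F(Γ)` are the facets of `Γ`, the lcm of a set of facets is their union, and a monomial
divides `m` strictly iff its support is properly contained in `m`.  By the
Bayer–Peeva–Sturmfels formula the Betti number vanishes unless `m` is an lcm of generators,
and otherwise equals the dimension of the corresponding reduced homology of the restricted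
Taylor complex. -/
noncomputable def facetBetti (k : Type) [Field k] (Γ : Finset (Finset α)) (i : ℕ)
    (m : Finset α) : ℕ :=
  if ∃ σ : Finset (Fin Γ.card),
      (σ.sup fun v => ((Γ.equivFin.symm v : { x // x ∈ Γ }) : Finset α)) = m then
    bettiOfTaylor k Γ.card
      (fun σ => (σ.sup fun v => ((Γ.equivFin.symm v : { x // x ∈ Γ }) : Finset α)) ⊂ m) i
  else 0

section Aux
variable {s : ℕ}

lemma myFilterInsertCard (A : Finset (Fin s)) {v : Fin s} (w : Fin s) (hv : v ∉ A) :
    ((insert v A).filter (· < w)).card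
      = (A.filter (· < w)).card + (if v < w then 1 else 0) := by
  rw [Finset.filter_insert]
  split
  · rw [Finset.card_insert_of_notMem fun hc => hv (Finset.mem_of_mem_filter _ hc)]
  · rw [add_zero]

lemma mySignSwap (𝕜 : Type) [Field 𝕜] (A : Finset (Fin s)) {v w : Fin s}
    (hv : v ∉ A) (hw : w ∉ A) (hvw : v ≠ w) :
    (-1 : 𝕜) ^ (A.filter (· < v)).card * (-1) ^ ((insert v A).filter (· < w)).card
      = -((-1) ^ (A.filter (· < w)).card * (-1) ^ ((insert w A).filter (· < v)).card) := by
  rw [myFilterInsertCard A w hv, myFilterInsertCard A v hw]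
  rcases lt_or_gt_of_ne hvw with h | h
  · rw [if_pos h, if_neg (asymm h)]
    simp [pow_add, pow_succ]; ring
  · rw [if_neg (asymm h), if_pos h]
    simp [pow_add, pow_succ]; ring

lemma taylorBd_comp (𝕜 : Type) [Field 𝕜] (P : Finset (Fin s) → Prop)
    (hP : ∀ ⦃A B : Finset (Fin s)⦄, A ⊆ B → P B → P A) (j : ℕ)
    (f : TaylorChain 𝕜 s P (j + 2)) :
    taylorBd 𝕜 s P j (taylorBd 𝕜 s P (j + 1) f) = 0 := by
  funext τ
  simp only [taylorBd, LinearMap.coe_mk, AddHom.coe_mk, Pi.zero_apply]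
  -- flatten the double sum
  have hterm : ∀ v : Fin s,
      (if h : v ∉ τ.1 ∧ P (insert v τ.1) then
        (-1 : 𝕜) ^ (τ.1.filter (· < v)).card *
          ∑ w : Fin s,
            (if h' : w ∉ insert v τ.1 ∧ P (insert w (insert v τ.1)) then
              (-1 : 𝕜) ^ ((insert v τ.1).filter (· < w)).card *
                f ⟨insert w (insert v τ.1), h'.2, by
                  rw [Finset.card_insert_of_notMem h'.1,
                    Finset.card_insert_of_notMem h.1, τ.2.2]⟩
            else 0)
      else 0)
      = ∑ w : Fin s,
        (if h : (v ∉ τ.1 ∧ w ∉ insert v τ.1) ∧ P (insert w (insert v τ.1)) then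
          (-1 : 𝕜) ^ (τ.1.filter (· < v)).card *
            ((-1 : 𝕜) ^ ((insert v τ.1).filter (· < w)).card *
              f ⟨insert w (insert v τ.1), h.2, by
                rw [Finset.card_insert_of_notMem h.1.2,
                  Finset.card_insert_of_notMem h.1.1, τ.2.2]⟩)
        else 0) := by
    intro v
    by_cases hv : v ∉ τ.1 ∧ P (insert v τ.1)
    · rw [dif_pos hv, Finset.mul_sum]
      refine Finset.sum_congr rfl fun w _ => ?_
      by_cases hw : w ∉ insert v τ.1 ∧ P (insert w (insert v τ.1))
      · rw [dif_pos hw, dif_pos ⟨⟨hv.1, hw.1⟩, hw.2⟩]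
      · rw [dif_neg hw, dif_neg (fun hc => hw ⟨hc.1.2, hc.2⟩), mul_zero]
    · rw [dif_neg hv]
      symm
      refine Finset.sum_eq_zero fun w _ => ?_
      rw [dif_neg]
      rintro ⟨⟨h1, h2⟩, h3⟩
      exact hv ⟨h1, hP (Finset.subset_insert _ _) h3⟩
  rw [Finset.sum_congr rfl fun v _ => hterm v, ← Finset.sum_product']
  refine Finset.sum_involution (fun p _ => (p.2, p.1)) ?_ ?_ (fun p hp => Finset.mem_univ _)
    (fun p hp => rfl)
  · rintro ⟨v, w⟩ -
    by_cases hc : (v ∉ τ.1 ∧ w ∉ insert v τ.1) ∧ P (insert w (insert v τ.1))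
    · have hwv : w ∉ τ.1 := fun h => hc.1.2 (Finset.mem_insert_of_mem h)
      have hvw : v ≠ w := fun h => hc.1.2 (h ▸ Finset.mem_insert_self v τ.1)
      have hvins : v ∉ insert w τ.1 := by
        simp only [Finset.mem_insert, not_or]
        exact ⟨hvw, hc.1.1⟩
      have hcomm : insert w (insert v τ.1) = insert v (insert w τ.1) :=
        Finset.insert_comm _ _ _
      have hc' : (w ∉ τ.1 ∧ v ∉ insert w τ.1) ∧ P (insert v (insert w τ.1)) :=
        ⟨⟨hwv, hvins⟩, hcomm ▸ hc.2⟩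
      rw [dif_pos hc, dif_pos hc']
      have hfeq : f ⟨insert w (insert v τ.1), hc.2, by
            rw [Finset.card_insert_of_notMem hc.1.2,
              Finset.card_insert_of_notMem hc.1.1, τ.2.2]⟩
          = f ⟨insert v (insert w τ.1), hc'.2, by
            rw [Finset.card_insert_of_notMem hc'.1.2,
              Finset.card_insert_of_notMem hc'.1.1, τ.2.2]⟩ := by
        congr 1
        exact Subtype.ext hcomm
      rw [hfeq, ← mul_assoc, ← mul_assoc,
        mySignSwap 𝕜 τ.1 hc.1.1 hwv hvw]
      ring
    · have hc' : ¬((w ∉ τ.1 ∧ v ∉ insert w τ.1) ∧ P (insert v (insert w τ.1))) := by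
        rintro ⟨⟨h1, h2⟩, h3⟩
        have hvτ : v ∉ τ.1 := fun h => h2 (Finset.mem_insert_of_mem h)
        have hwv : w ≠ v := fun h => h2 (h ▸ Finset.mem_insert_self w τ.1)
        have : w ∉ insert v τ.1 := by
          simp only [Finset.mem_insert, not_or]
          exact ⟨hwv, h1⟩
        exact hc ⟨⟨hvτ, this⟩, (Finset.insert_comm v w τ.1) ▸ h3⟩
      rw [dif_neg hc, dif_neg hc', add_zero]
  · rintro ⟨v, w⟩ - hne
    by_cases hc : (v ∉ τ.1 ∧ w ∉ insert v τ.1) ∧ P (insert w (insert v τ.1))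
    · intro h
      have : v = w := congrArg Prod.snd h
      exact hc.1.2 (this ▸ Finset.mem_insert_self v τ.1)
    · rw [dif_neg hc] at hne
      exact absurd rfl hne

end Aux



section Mat
variable {s : ℕ}

-- L3: order embedding of an erased finset
lemma myOrderEmbErase {K : ℕ} (t : Finset (Fin s)) (ht : t.card = K + 1) (c0 : Fin (K + 1))
    (hcard : (t.erase (t.orderEmbOfFin ht c0)).card = K) (c : Fin K) :
    (t.erase (t.orderEmbOfFin ht c0)).orderEmbOfFin hcard c
      = t.orderEmbOfFin ht (c0.succAbove c) := by
  have hu := Finset.orderEmbOfFin_unique hcard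
    (f := fun c : Fin K => t.orderEmbOfFin ht (c0.succAbove c)) ?_ ?_
  · exact (congrFun hu c).symm
  · intro x
    refine Finset.mem_erase.mpr ⟨?_, Finset.orderEmbOfFin_mem _ _ _⟩
    exact fun h => Fin.succAbove_ne c0 x ((t.orderEmbOfFin ht).injective h)
  · exact (t.orderEmbOfFin ht).strictMono.comp (Fin.strictMono_succAbove c0)

-- L4: position of an element equals number of smaller elements
lemma myCardFilterLt {K : ℕ} (t : Finset (Fin s)) (ht : t.card = K) (c0 : Fin K) :
    (t.filter (· < t.orderEmbOfFin ht c0)).card = (c0 : ℕ) := by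
  have himg : t.filter (· < t.orderEmbOfFin ht c0)
      = (Finset.univ.filter (· < c0)).image (t.orderEmbOfFin ht) := by
    ext x
    simp only [Finset.mem_filter, Finset.mem_image, Finset.mem_univ, true_and]
    constructor
    · rintro ⟨hx, hlt⟩
      obtain ⟨c, hc⟩ : ∃ c, t.orderEmbOfFin ht c = x := by
        rcases Finset.orderIsoOfFin t ht |>.surjective ⟨x, hx⟩ with ⟨c, hc⟩
        exact ⟨c, congrArg Subtype.val hc⟩
      refine ⟨c, ?_, hc⟩
      have := hc ▸ hlt
      exact (t.orderEmbOfFin ht).strictMono.lt_iff_lt.mp this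
    · rintro ⟨c, hc, rfl⟩
      exact ⟨Finset.orderEmbOfFin_mem _ _ _, (t.orderEmbOfFin ht).strictMono hc⟩
  rw [himg, Finset.card_image_of_injective _ (t.orderEmbOfFin ht).injective]
  have h2 : (Finset.univ.filter (· < c0)).image Fin.val = Finset.range (c0 : ℕ) := by
    ext x
    simp only [Finset.mem_image, Finset.mem_filter, Finset.mem_univ, true_and,
      Finset.mem_range]
    constructor
    · rintro ⟨c, hc, rfl⟩; exact hc
    · intro hx
      exact ⟨⟨x, lt_trans hx c0.isLt⟩, by simpa [Fin.lt_def] using hx, rfl⟩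
  rw [← Finset.card_range (c0 : ℕ), ← h2,
    Finset.card_image_of_injective _ Fin.val_injective]

end Mat

section Mat2
variable (𝕜 : Type) [Field 𝕜] {s : ℕ}

noncomputable def myB (ρ : Fin s → ℕ) (K : ℕ) (σ : Finset (Fin s)) (h : σ.card = K) :
    Matrix (Fin K) (Fin K) 𝕜 :=
  fun j c => if ρ (σ.orderEmbOfFin h c) = (j : ℕ) + 1 then 1 else 0

noncomputable def myC (ρ : Fin s → ℕ) (K : ℕ) (σ : Finset (Fin s)) : 𝕜 :=
  if h : σ.card = K then (myB 𝕜 ρ K σ h).det else 0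

noncomputable def myN (ρ : Fin s → ℕ) (K : ℕ) (t : Finset (Fin s)) (h : t.card = K + 1) :
    Matrix (Fin (K + 1)) (Fin (K + 1)) 𝕜 :=
  fun i c => if (i : ℕ) = 0 then 1 else if ρ (t.orderEmbOfFin h c) = (i : ℕ) then 1 else 0

lemma myMapUniv {K : ℕ} (t : Finset (Fin s)) (ht : t.card = K) :
    Finset.map (t.orderEmbOfFin ht).toEmbedding Finset.univ = t := by
  apply Finset.eq_of_subset_of_card_le
  · intro x hx
    rcases Finset.mem_map.mp hx with ⟨c, -, rfl⟩
    exact Finset.orderEmbOfFin_mem _ _ _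
  · rw [Finset.card_map, Finset.card_univ, Fintype.card_fin, ht]

lemma myCofactor (ρ : Fin s → ℕ) (K : ℕ) (t : Finset (Fin s)) (ht : t.card = K + 1) :
    ∑ v ∈ t, (-1 : 𝕜) ^ (t.filter (· < v)).card * myC 𝕜 ρ K (t.erase v)
      = (myN 𝕜 ρ K t ht).det := by
  rw [Matrix.det_succ_row_zero]
  have hsum : ∀ f : Fin s → 𝕜,
      ∑ v ∈ t, f v = ∑ c0 : Fin (K + 1), f ((t.orderEmbOfFin ht).toEmbedding c0) := by
    intro f
    conv_lhs => rw [← myMapUniv t ht]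
    rw [Finset.sum_map]
  rw [hsum]
  refine Finset.sum_congr rfl fun c0 _ => ?_
  simp only [RelEmbedding.coe_toEmbedding]
  have hN0 : myN 𝕜 ρ K t ht 0 c0 = 1 := by simp [myN]
  rw [hN0, mul_one]
  have hvmem : t.orderEmbOfFin ht c0 ∈ t := Finset.orderEmbOfFin_mem _ _ _
  have hcard : (t.erase (t.orderEmbOfFin ht c0)).card = K := by
    simp [Finset.card_erase_of_mem hvmem, ht]
  have hsub : ((myN 𝕜 ρ K t ht).submatrix Fin.succ c0.succAbove)
      = myB 𝕜 ρ K (t.erase (t.orderEmbOfFin ht c0)) hcard := by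
    funext j c
    simp only [Matrix.submatrix_apply, myN, myB, Fin.val_succ]
    rw [if_neg (by omega : ¬ (j : ℕ) + 1 = 0)]
    rw [myOrderEmbErase t ht c0 hcard c]
  rw [hsub]
  have hCe : myC 𝕜 ρ K (t.erase (t.orderEmbOfFin ht c0))
      = (myB 𝕜 ρ K (t.erase (t.orderEmbOfFin ht c0)) hcard).det := by
    rw [myC, dif_pos hcard]
  rw [hCe, myCardFilterLt t ht c0]

lemma myPin (P : Finset (Fin s) → Prop) (ρ : Fin s → ℕ) (K : ℕ) (t : Finset (Fin s))
    (ht : t.card = K + 1) (hface : ∀ v ∈ t, P (t.erase v)) :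
    (∑ σ : {σ : Finset (Fin s) // P σ ∧ σ.card = K}, myC 𝕜 ρ K σ.1 *
      (∑ v : Fin s, if v ∉ σ.1 ∧ insert v σ.1 = t then
          (-1 : 𝕜) ^ (σ.1.filter (· < v)).card else 0))
      = ∑ v ∈ t, (-1 : 𝕜) ^ (t.filter (· < v)).card * myC 𝕜 ρ K (t.erase v) := by
  have step1 : ∀ σ : {σ : Finset (Fin s) // P σ ∧ σ.card = K},
      myC 𝕜 ρ K σ.1 * (∑ v : Fin s, if v ∉ σ.1 ∧ insert v σ.1 = t then
          (-1 : 𝕜) ^ (σ.1.filter (· < v)).card else 0)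
      = ∑ v : Fin s, (if v ∉ σ.1 ∧ insert v σ.1 = t then
          myC 𝕜 ρ K σ.1 * (-1 : 𝕜) ^ (σ.1.filter (· < v)).card else 0) := by
    intro σ
    rw [Finset.mul_sum]
    exact Finset.sum_congr rfl fun v _ => by rw [mul_ite, mul_zero]
  rw [Finset.sum_congr rfl fun σ _ => step1 σ, Finset.sum_comm]
  have step2 : ∀ v : Fin s,
      (∑ σ : {σ : Finset (Fin s) // P σ ∧ σ.card = K},
        if v ∉ σ.1 ∧ insert v σ.1 = t then
          myC 𝕜 ρ K σ.1 * (-1 : 𝕜) ^ (σ.1.filter (· < v)).card else 0)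
      = if v ∈ t then (-1 : 𝕜) ^ (t.filter (· < v)).card * myC 𝕜 ρ K (t.erase v) else 0 := by
    intro v
    by_cases hv : v ∈ t
    · rw [if_pos hv]
      have hc : (t.erase v).card = K := by simp [Finset.card_erase_of_mem hv, ht]
      have hiff : ∀ σ : {σ : Finset (Fin s) // P σ ∧ σ.card = K},
          (v ∉ σ.1 ∧ insert v σ.1 = t) ↔ σ = ⟨t.erase v, hface v hv, hc⟩ := by
        intro σ
        constructor
        · rintro ⟨h1, h2⟩
          apply Subtype.ext
          show σ.1 = t.erase v
          rw [← h2, Finset.erase_insert h1]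
        · rintro rfl
          exact ⟨Finset.notMem_erase _ _, Finset.insert_erase hv⟩
      rw [Finset.sum_congr rfl fun σ _ => by rw [if_congr (hiff σ) rfl rfl]]
      rw [Finset.sum_ite_eq' Finset.univ (⟨t.erase v, hface v hv, hc⟩ :
          {σ : Finset (Fin s) // P σ ∧ σ.card = K})
        (fun σ => myC 𝕜 ρ K σ.1 * (-1 : 𝕜) ^ (σ.1.filter (· < v)).card)]
      rw [if_pos (Finset.mem_univ _)]
      have hfe : ((t.erase v).filter (· < v)) = t.filter (· < v) := by
        rw [Finset.filter_erase, Finset.erase_eq_of_notMem]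
        simp
      show myC 𝕜 ρ K (t.erase v) * (-1 : 𝕜) ^ ((t.erase v).filter (· < v)).card = _
      rw [hfe, mul_comm]
    · rw [if_neg hv]
      refine Finset.sum_eq_zero fun σ _ => ?_
      rw [if_neg]
      rintro ⟨h1, h2⟩
      exact hv (h2 ▸ Finset.mem_insert_self v σ.1)
  rw [Finset.sum_congr rfl fun v _ => step2 v]
  rw [Finset.sum_ite_mem, Finset.univ_inter]

lemma taylorBd_apply (𝕜 : Type) [Field 𝕜] {s : ℕ} (P : Finset (Fin s) → Prop) (j : ℕ)
    (f : TaylorChain 𝕜 s P (j + 1)) (τ : {σ : Finset (Fin s) // P σ ∧ σ.card = j}) :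
    taylorBd 𝕜 s P j f τ = ∑ v : Fin s,
      if h : v ∉ τ.1 ∧ P (insert v τ.1) then
        (-1 : 𝕜) ^ (τ.1.filter (· < v)).card *
          f ⟨insert v τ.1, h.2, by rw [Finset.card_insert_of_notMem h.1, τ.2.2]⟩
      else 0 := rfl

noncomputable def myNu (𝕜 : Type) [Field 𝕜] {s : ℕ} (P : Finset (Fin s) → Prop)
    (ρ : Fin s → ℕ) (K : ℕ) (f : TaylorChain 𝕜 s P K) : 𝕜 :=
  ∑ σ : {σ : Finset (Fin s) // P σ ∧ σ.card = K}, myC 𝕜 ρ K σ.1 * f σ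

lemma myPinNu (P : Finset (Fin s) → Prop) (ρ : Fin s → ℕ) (K : ℕ) (t : Finset (Fin s))
    (ht : t.card = K + 1) (hface : ∀ v ∈ t, P (t.erase v)) :
    myNu 𝕜 P ρ K (fun σ => ∑ v : Fin s, if v ∉ σ.1 ∧ insert v σ.1 = t then
      (-1 : 𝕜) ^ (σ.1.filter (· < v)).card else 0) = (myN 𝕜 ρ K t ht).det := by
  have h1 := (myPin 𝕜 P ρ K t ht hface).trans (myCofactor 𝕜 ρ K t ht)
  simpa [myNu] using h1

lemma myNuBd (P : Finset (Fin s) → Prop)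
    (hPdown : ∀ ⦃A B : Finset (Fin s)⦄, A ⊆ B → P B → P A) (ρ : Fin s → ℕ) (K : ℕ)
    (hdet : ∀ τ : {σ : Finset (Fin s) // P σ ∧ σ.card = K + 1},
      (myN 𝕜 ρ K τ.1 τ.2.2).det = 0)
    (f : TaylorChain 𝕜 s P (K + 1)) :
    myNu 𝕜 P ρ K (taylorBd 𝕜 s P K f) = 0 := by
  have hbde : ∀ (τ : {σ : Finset (Fin s) // P σ ∧ σ.card = K + 1})
      (σ : {σ : Finset (Fin s) // P σ ∧ σ.card = K}),
      taylorBd 𝕜 s P K (fun x => if τ = x then (1 : 𝕜) else 0) σ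
      = ∑ v : Fin s, if v ∉ σ.1 ∧ insert v σ.1 = τ.1 then
          (-1 : 𝕜) ^ (σ.1.filter (· < v)).card else 0 := by
    intro τ σ
    rw [taylorBd_apply]
    refine Finset.sum_congr rfl fun v _ => ?_
    by_cases hc : v ∉ σ.1 ∧ insert v σ.1 = τ.1
    · have hPi : P (insert v σ.1) := by rw [hc.2]; exact τ.2.1
      rw [dif_pos ⟨hc.1, hPi⟩, if_pos hc, if_pos (Subtype.ext hc.2.symm), mul_one]
    · rw [if_neg hc]
      by_cases hg : v ∉ σ.1 ∧ P (insert v σ.1)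
      · rw [dif_pos hg, if_neg, mul_zero]
        intro h
        exact hc ⟨hg.1, (congrArg Subtype.val h).symm⟩
      · rw [dif_neg hg]
  have hbdf : taylorBd 𝕜 s P K f
      = ∑ τ : {σ : Finset (Fin s) // P σ ∧ σ.card = K + 1},
        f τ • taylorBd 𝕜 s P K (fun x => if τ = x then (1 : 𝕜) else 0) := by
    conv_lhs => rw [pi_eq_sum_univ f]
    rw [map_sum]
    exact Finset.sum_congr rfl fun τ _ => by rw [map_smul]
  rw [hbdf]
  simp only [myNu]
  rw [Finset.sum_congr rfl fun σ _ => by rw [Finset.sum_apply, Finset.mul_sum]]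
  rw [Finset.sum_comm]
  refine Finset.sum_eq_zero fun τ _ => ?_
  have hre : ∀ σ : {σ : Finset (Fin s) // P σ ∧ σ.card = K},
      myC 𝕜 ρ K σ.1 * (f τ • taylorBd 𝕜 s P K (fun x => if τ = x then (1 : 𝕜) else 0)) σ
      = f τ * (myC 𝕜 ρ K σ.1 *
        taylorBd 𝕜 s P K (fun x => if τ = x then (1 : 𝕜) else 0) σ) := by
    intro σ
    simp only [Pi.smul_apply, smul_eq_mul]
    ring
  rw [Finset.sum_congr rfl fun σ _ => hre σ, ← Finset.mul_sum]
  have hface : ∀ v ∈ τ.1, P (τ.1.erase v) := fun v hv =>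
    hPdown (Finset.erase_subset _ _) τ.2.1
  have hPN : (∑ σ : {σ : Finset (Fin s) // P σ ∧ σ.card = K},
      myC 𝕜 ρ K σ.1 * taylorBd 𝕜 s P K (fun x => if τ = x then (1 : 𝕜) else 0) σ)
      = (myN 𝕜 ρ K τ.1 τ.2.2).det := by
    rw [Finset.sum_congr rfl fun σ _ => by rw [hbde τ σ]]
    have h2 := myPinNu 𝕜 P ρ K τ.1 τ.2.2 hface
    simpa [myNu] using h2
  rw [hPN, hdet τ, mul_zero]

end Mat2

section Det
variable {α : Type*} [DecidableEq α] (𝕜 : Type) [Field 𝕜] {s : ℕ}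

lemma myListUnionCons (a : Finset α) (l : List (Finset α)) :
    listUnion (a :: l) = a ∪ listUnion l := rfl

lemma myKeyDet (gen : Fin s → Finset α) (m : Finset α) (L : List (Finset α)) (ρ : Fin s → ℕ)
    (K : ℕ) (hK : L.length = K + 1)
    (hstep : ∀ v j, gen v ⊆ m → ρ v = j + 1 → ∃ hj : j < L.length,
        L.get ⟨j, hj⟩ ⊆ gen v ∪ listUnion (L.drop (j + 1)))
    (hrange : ∀ v, gen v ⊆ m → 1 ≤ ρ v ∧ ρ v ≤ L.length)
    (hcovm : ∀ x ∈ m, x ∈ listUnion L)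
    (t : Finset (Fin s)) (ht : t.card = K + 1)
    (hsub : ∀ v ∈ t, gen v ⊆ m) (hnc : ¬ m ⊆ t.sup gen) :
    (myN 𝕜 ρ K t ht).det = 0 := by
  by_cases hinj : Function.Injective fun c : Fin (K + 1) => ρ (t.orderEmbOfFin ht c)
  · exfalso
    have hsurj : ∀ j : ℕ, 1 ≤ j → j ≤ K + 1 →
        ∃ c : Fin (K + 1), ρ (t.orderEmbOfFin ht c) = j := by
      intro j h1 h2
      have him : (Finset.univ.image fun c : Fin (K + 1) => ρ (t.orderEmbOfFin ht c))
          = Finset.Icc 1 (K + 1) := by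
        apply Finset.eq_of_subset_of_card_le
        · intro x hx
          rcases Finset.mem_image.mp hx with ⟨c, -, rfl⟩
          have := hrange _ (hsub _ (Finset.orderEmbOfFin_mem t ht c))
          rw [Finset.mem_Icc]
          omega
        · rw [Nat.card_Icc, Finset.card_image_of_injective _ hinj, Finset.card_univ,
            Fintype.card_fin]
          omega
      have hj : j ∈ Finset.Icc 1 (K + 1) := by rw [Finset.mem_Icc]; omega
      rw [← him] at hj
      rcases Finset.mem_image.mp hj with ⟨c, -, hc⟩
      exact ⟨c, hc⟩
    have hchain : ∀ d : ℕ, listUnion (L.drop (L.length - d)) ⊆ t.sup gen := by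
      intro d
      induction d with
      | zero =>
        rw [Nat.sub_zero, List.drop_length]
        exact Finset.empty_subset _
      | succ d ih =>
        by_cases hd : L.length ≤ d
        · have h1 : L.length - (d + 1) = L.length - d := by omega
          rw [h1]
          exact ih
        · push_neg at hd
          have hj : L.length - (d + 1) < L.length := by omega
          have hj1 : L.length - (d + 1) + 1 = L.length - d := by omega
          rw [List.drop_eq_getElem_cons hj, myListUnionCons]
          obtain ⟨c, hc⟩ := hsurj (L.length - (d + 1) + 1) (by omega) (by omega)
          obtain ⟨hj', hssub⟩ := hstep _ _ (hsub _ (Finset.orderEmbOfFin_mem t ht c)) hc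
          have hgv : gen (t.orderEmbOfFin ht c) ⊆ t.sup gen :=
            Finset.le_sup (Finset.orderEmbOfFin_mem t ht c)
          have htail : listUnion (L.drop (L.length - (d + 1) + 1)) ⊆ t.sup gen := by
            rw [hj1]
            exact ih
          refine Finset.union_subset ?_ htail
          refine subset_trans ?_ (Finset.union_subset hgv htail)
          exact hssub
    apply hnc
    intro x hx
    have h0 := hchain L.length
    rw [Nat.sub_self, List.drop_zero] at h0
    exact h0 (hcovm x hx)
  · simp only [Function.Injective, not_forall] at hinj
    obtain ⟨c, c', hval, hne⟩ := hinj
    rw [← Matrix.det_transpose]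
    apply Matrix.det_zero_of_row_eq hne
    funext i
    simp only [Matrix.transpose_apply, myN, hval]

lemma myDetNe (ρ : Fin s → ℕ) (K : ℕ) (t : Finset (Fin s)) (ht : t.card = K + 1)
    (hinj : Function.Injective fun c : Fin (K + 1) => ρ (t.orderEmbOfFin ht c))
    (hrange : ∀ c : Fin (K + 1),
      1 ≤ ρ (t.orderEmbOfFin ht c) ∧ ρ (t.orderEmbOfFin ht c) ≤ K + 1) :
    (myN 𝕜 ρ K t ht).det ≠ 0 := by
  have hmod : ∀ x : ℕ, 1 ≤ x → x ≤ K + 1 → x % (K + 1) = if x = K + 1 then 0 else x := by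
    intro x h1 h2
    by_cases hx : x = K + 1
    · simp [hx, Nat.mod_self]
    · rw [Nat.mod_eq_of_lt (by omega)]
      simp [hx]
  set π : Fin (K + 1) → Fin (K + 1) :=
    fun c => ⟨ρ (t.orderEmbOfFin ht c) % (K + 1), Nat.mod_lt _ (Nat.succ_pos K)⟩ with hπ
  have hπinj : Function.Injective π := by
    intro c c' h
    apply hinj
    have h1 := hrange c
    have h2 := hrange c'
    have hv : ρ (t.orderEmbOfFin ht c) % (K + 1)
        = ρ (t.orderEmbOfFin ht c') % (K + 1) := congrArg Fin.val h
    rw [hmod _ h1.1 h1.2, hmod _ h2.1 h2.2] at hv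
    show ρ (t.orderEmbOfFin ht c) = ρ (t.orderEmbOfFin ht c')
    split at hv <;> split at hv <;> omega
  have hπbij : Function.Bijective π := Finite.injective_iff_bijective.mp hπinj
  set e : Equiv.Perm (Fin (K + 1)) := Equiv.ofBijective π hπbij with he
  set U : Matrix (Fin (K + 1)) (Fin (K + 1)) 𝕜 :=
    (fun i j => if (i : ℕ) = 0 then 1 else if i = j then (1 : 𝕜) else 0) with hU
  have hperm : ∀ i c : Fin (K + 1),
      (Equiv.Perm.permMatrix 𝕜 e).transpose i c = if e c = i then (1 : 𝕜) else 0 := by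
    intro i c
    simp [Equiv.Perm.permMatrix, Equiv.toPEquiv, PEquiv.toMatrix]
  have hfact : myN 𝕜 ρ K t ht = U * (Equiv.Perm.permMatrix 𝕜 e).transpose := by
    funext i c
    rw [Matrix.mul_apply]
    rw [Finset.sum_congr rfl fun j _ => by rw [hperm j c]]
    by_cases hi : (i : ℕ) = 0
    · have hUrow : ∀ j, U i j = 1 := fun j => by
        simp [hU, hi]
        intro h
        exact absurd (Fin.val_eq_zero_iff.mp hi) h
      rw [Finset.sum_congr rfl fun j _ => by rw [hUrow j, one_mul]]
      rw [Finset.sum_ite_eq Finset.univ (e c) (fun _ => (1 : 𝕜)),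
        if_pos (Finset.mem_univ _)]
      simp [myN, hi]
    · have hUrow : ∀ j, U i j = if i = j then (1 : 𝕜) else 0 := fun j => by
        simp [hU, hi]
        intro h
        exact absurd (Fin.val_eq_zero_iff.mpr h) hi
      rw [Finset.sum_congr rfl fun j _ =>
        by rw [hUrow j, boole_mul]]
      rw [Finset.sum_ite_eq Finset.univ i (fun j => if e c = j then (1 : 𝕜) else 0),
        if_pos (Finset.mem_univ _)]
      have hρ1 := hrange c
      have hec : (e c = i) ↔ (ρ (t.orderEmbOfFin ht c) = (i : ℕ)) := by
        rw [Fin.ext_iff]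
        show (ρ (t.orderEmbOfFin ht c) % (K + 1) = (i : ℕ)) ↔ _
        rw [hmod _ hρ1.1 hρ1.2]
        have hiK : (i : ℕ) < K + 1 := i.isLt
        split <;> omega
      simp only [myN, hi, if_false]
      rw [if_congr hec rfl rfl]
  rw [hfact, Matrix.det_mul, Matrix.det_transpose, Matrix.det_permutation]
  have hdetU : U.det = 1 := by
    rw [Matrix.det_of_upperTriangular]
    · apply Finset.prod_eq_one
      intro i _
      by_cases hi : (i : ℕ) = 0 <;> simp [hU, hi]
    · intro i j hlt
      have h1 : (i : ℕ) ≠ 0 := by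
        have : (j : ℕ) < (i : ℕ) := hlt
        omega
      have h2 : i ≠ j := by
        intro h
        rw [h] at hlt
        exact lt_irrefl _ hlt
      simp [hU, h1, h2]
      intro h
      exact h1 (by simp [h])
  rw [hdetU, one_mul]
  rcases Int.units_eq_one_or (Equiv.Perm.sign e) with h | h <;> simp [h]

end Det

lemma myMemListUnion {α : Type*} [DecidableEq α] (x : α) (L : List (Finset α)) :
    x ∈ listUnion L ↔ ∃ F ∈ L, x ∈ F := by
  induction L with
  | nil => simp [listUnion]
  | cons a l ih => simp [myListUnionCons, ih]

/-- If the induced subcollection `Γ_m` of a simplicial complex `Γ` (the facets of `Γ`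
contained in the squarefree multidegree `m`, as a complex with vertex set `m`) has a well
ordered facet cover of cardinality `i`, then `b_{i,m}(S/F(Γ)) ≠ 0`. -/
theorem wellOrderedFacetCover_gives_nonzero_betti (k : Type) [Field k]
    (Γ : Finset (Finset α)) (hfacets : ∀ F ∈ Γ, ∀ G ∈ Γ, F ⊆ G → F = G)
    (hne : ∀ F ∈ Γ, F.Nonempty)
    (m : Finset α) (L : List (Finset α))
    (hL : IsWellOrderedFacetCover m (inducedSub Γ m) L) :
    facetBetti k Γ L.length m ≠ 0 := by
  obtain ⟨hnodup, hmemL, ⟨⟨hsubL, hcov⟩, hmin⟩, hwo⟩ := hL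
  unfold facetBetti
  set gen : Fin Γ.card → Finset α :=
    fun v => ((Γ.equivFin.symm v : { x // x ∈ Γ }) : Finset α) with hgen
  set P : Finset (Fin Γ.card) → Prop := fun σ => σ.sup gen ⊂ m with hPdef
  -- basic facts
  have hgenΓ : ∀ v, gen v ∈ Γ := fun v => (Γ.equivFin.symm v).2
  have hgeninj : Function.Injective gen := by
    intro v v' h
    exact Γ.equivFin.symm.injective (Subtype.ext h)
  have hFsubm : ∀ F ∈ L, F ⊆ m := fun F hF => (Finset.mem_filter.mp (hmemL F hF)).2
  set σ0 : Finset (Fin Γ.card) := Finset.univ.filter (fun v => gen v ∈ L) with hσ0def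
  have himage : σ0.image gen = L.toFinset := by
    ext F
    simp only [Finset.mem_image, List.mem_toFinset]
    constructor
    · rintro ⟨v, hv, rfl⟩
      exact (Finset.mem_filter.mp hv).2
    · intro hF
      have hΓF : F ∈ Γ := (Finset.mem_filter.mp (hmemL F hF)).1
      refine ⟨Γ.equivFin ⟨F, hΓF⟩, ?_, ?_⟩
      · refine Finset.mem_filter.mpr ⟨Finset.mem_univ _, ?_⟩
        show ((Γ.equivFin.symm (Γ.equivFin ⟨F, hΓF⟩) : { x // x ∈ Γ }) : Finset α) ∈ L
        rw [Equiv.symm_apply_apply]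
        exact hF
      · show ((Γ.equivFin.symm (Γ.equivFin ⟨F, hΓF⟩) : { x // x ∈ Γ }) : Finset α) = F
        rw [Equiv.symm_apply_apply]
  have hmemσ0 : ∀ v, v ∈ σ0 ↔ gen v ∈ L := by
    intro v
    rw [hσ0def, Finset.mem_filter]
    simp
  have hcard0 : σ0.card = L.length := by
    rw [← List.toFinset_card_of_nodup hnodup, ← himage,
      Finset.card_image_of_injective _ hgeninj]
  have hsup0 : σ0.sup gen = m := by
    apply Finset.Subset.antisymm
    · exact Finset.sup_le fun v hv => hFsubm (gen v) ((hmemσ0 v).mp hv)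
    · intro x hx
      rcases hcov x hx with ⟨F, hFD, hxF⟩
      rw [← himage] at hFD
      rcases Finset.mem_image.mp hFD with ⟨v, hv, rfl⟩
      exact Finset.mem_sup.mpr ⟨v, hv, hxF⟩
  rw [if_pos ⟨σ0, hsup0⟩]
  have hPdown : ∀ ⦃A B : Finset (Fin Γ.card)⦄, A ⊆ B → P B → P A := by
    intro A B hAB hB
    have hB' : B.sup gen ⊂ m := hB
    show A.sup gen ⊂ m
    have hAB' : A.sup gen ⊆ B.sup gen := Finset.sup_mono hAB
    rw [Finset.ssubset_iff_subset_ne] at hB' ⊢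
    exact ⟨hAB'.trans hB'.1, fun h => hB'.2 (Finset.Subset.antisymm hB'.1 (h ▸ hAB'))⟩
  have hproper : ∀ X : Finset (Fin Γ.card), X ⊆ σ0 → X ≠ σ0 → P X := by
    intro X hXs hXne
    have hXm : X.sup gen ⊆ m := by
      rw [← hsup0]
      exact (Finset.sup_mono hXs : X.sup gen ≤ σ0.sup gen)
    show X.sup gen ⊂ m
    rw [Finset.ssubset_iff_subset_ne]
    refine ⟨hXm, ?_⟩
    intro hXeq
    apply hmin (X.image gen)
    · rw [← himage, Finset.ssubset_iff_subset_ne]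
      refine ⟨Finset.image_subset_image hXs, ?_⟩
      intro h
      exact hXne (Finset.image_injective hgeninj h)
    · constructor
      · intro F hF
        rcases Finset.mem_image.mp hF with ⟨v, hv, rfl⟩
        refine Finset.mem_filter.mpr ⟨hgenΓ v, ?_⟩
        show gen v ⊆ m
        rw [← hXeq]
        exact (Finset.le_sup hv : gen v ≤ X.sup gen)
      · intro x hx
        rw [← hXeq] at hx
        rcases Finset.mem_sup.mp hx with ⟨v, hv, hxv⟩
        exact ⟨gen v, Finset.mem_image_of_mem _ hv, hxv⟩
  -- the ordering function ρ
  have hwo' : ∀ v, gen v ⊆ m → gen v ∉ L → ∃ i, ∃ h : i + 1 < L.length,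
      L.get ⟨i, Nat.lt_of_succ_lt h⟩ ⊆ gen v ∪ listUnion (L.drop (i + 1)) := fun v hvm hvL =>
    hwo (gen v) (Finset.mem_filter.mpr ⟨hgenΓ v, hvm⟩) hvL
  set ρ : Fin Γ.card → ℕ := fun v =>
    if hvL : gen v ∈ L then L.idxOf (gen v) + 1
    else if h2 : ∃ i, ∃ h : i + 1 < L.length,
        L.get ⟨i, Nat.lt_of_succ_lt h⟩ ⊆ gen v ∪ listUnion (L.drop (i + 1)) then
      Nat.find h2 + 1
    else 0 with hρdef
  have hstep : ∀ v j, gen v ⊆ m → ρ v = j + 1 → ∃ hj : j < L.length,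
      L.get ⟨j, hj⟩ ⊆ gen v ∪ listUnion (L.drop (j + 1)) := by
    intro v j hvm hρv
    rw [hρdef] at hρv
    simp only at hρv
    by_cases hvL : gen v ∈ L
    · rw [dif_pos hvL] at hρv
      have hidx : L.idxOf (gen v) < L.length := List.idxOf_lt_length_iff.mpr hvL
      have hj : j < L.length := by omega
      refine ⟨hj, ?_⟩
      have hjeq : j = L.idxOf (gen v) := by omega
      subst hjeq
      have hget : L.get ⟨L.idxOf (gen v), hj⟩ = gen v := List.getElem_idxOf _
      rw [hget]
      exact Finset.subset_union_left
    · rw [dif_neg hvL, dif_pos (hwo' v hvm hvL)] at hρv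
      obtain ⟨hlt, hs⟩ := Nat.find_spec (hwo' v hvm hvL)
      have hjeq : j = Nat.find (hwo' v hvm hvL) := by omega
      subst hjeq
      exact ⟨Nat.lt_of_succ_lt hlt, hs⟩
  have hrange : ∀ v, gen v ⊆ m → 1 ≤ ρ v ∧ ρ v ≤ L.length := by
    intro v hvm
    rw [hρdef]
    simp only
    by_cases hvL : gen v ∈ L
    · rw [dif_pos hvL]
      have := List.idxOf_lt_length_iff.mpr hvL
      omega
    · rw [dif_neg hvL, dif_pos (hwo' v hvm hvL)]
      obtain ⟨hlt, -⟩ := Nat.find_spec (hwo' v hvm hvL)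
      omega
  have hρL : ∀ v, gen v ∈ L → ρ v = L.idxOf (gen v) + 1 := by
    intro v hvL
    rw [hρdef]
    simp only
    rw [dif_pos hvL]
  have hinjσ0 : ∀ v ∈ σ0, ∀ v' ∈ σ0, ρ v = ρ v' → v = v' := by
    intro v hv v' hv' h
    have hvL : gen v ∈ L := (hmemσ0 v).mp hv
    have hvL' : gen v' ∈ L := (hmemσ0 v').mp hv'
    rw [hρL v hvL, hρL v' hvL'] at h
    have hidx : L.idxOf (gen v) = L.idxOf (gen v') := by omega
    exact hgeninj ((List.idxOf_inj hvL).mp hidx)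
  have hcovm : ∀ x ∈ m, x ∈ listUnion L := by
    intro x hx
    rcases hcov x hx with ⟨F, hFD, hxF⟩
    exact (myMemListUnion x L).mpr ⟨F, List.mem_toFinset.mp hFD, hxF⟩
  have hPsup : ∀ X : Finset (Fin Γ.card), P X → (∀ v ∈ X, gen v ⊆ m) ∧ ¬ m ⊆ X.sup gen := by
    intro X hX
    constructor
    · intro v hv
      have h1 : gen v ≤ X.sup gen := Finset.le_sup hv
      have h2 : X.sup gen ⊆ m := hX.subset
      exact le_trans h1 h2
    · intro hmc
      exact hX.ne (Finset.Subset.antisymm hX.subset hmc)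
  -- case on the length of L
  rcases hlen : L.length with _ | _ | Kk
  · -- length 0 : m is empty
    have hm : m = ∅ := by
      rw [Finset.eq_empty_iff_forall_notMem]
      intro x hx
      rcases hcov x hx with ⟨F, hFD, -⟩
      rw [List.length_eq_zero_iff.mp hlen] at hFD
      simp at hFD
    simp only [bettiOfTaylor]
    rw [if_neg]
    · exact one_ne_zero
    · show ¬ (∅ : Finset (Fin Γ.card)).sup gen ⊂ m
      rw [hm, Finset.sup_empty]
      simp
  · -- length 1
    obtain ⟨v0, hv0⟩ := Finset.card_eq_one.mp (by rw [hcard0, hlen] : σ0.card = 1)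
    have hgv0m : gen v0 = m := by
      rw [← hsup0, hv0, Finset.sup_singleton]
    have hmne : m.Nonempty := by
      rw [← hgv0m]
      exact hne _ (hgenΓ v0)
    have hPempty : P ∅ := by
      show (∅ : Finset (Fin Γ.card)).sup gen ⊂ m
      have hemp : (∅ : Finset (Fin Γ.card)).sup gen = (∅ : Finset α) := Finset.sup_empty
      rw [hemp]
      exact Finset.empty_ssubset.mpr hmne
    simp only [bettiOfTaylor]
    have hcard1 : Fintype.card {σ : Finset (Fin Γ.card) // P σ ∧ σ.card = 0} = 1 := by
      rw [Fintype.card_eq_one_iff]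
      refine ⟨⟨∅, hPempty, Finset.card_empty⟩, ?_⟩
      rintro ⟨σ, hσP, hσc⟩
      exact Subtype.ext (Finset.card_eq_zero.mp hσc)
    have hbd0 : taylorBd k Γ.card P 0 = 0 := by
      apply LinearMap.ext
      intro f
      funext τ
      simp only [taylorBd, LinearMap.coe_mk, AddHom.coe_mk, LinearMap.zero_apply,
        Pi.zero_apply]
      refine Finset.sum_eq_zero fun v _ => ?_
      rw [dif_neg]
      rintro ⟨h1, h2⟩
      have hτ : τ.1 = ∅ := Finset.card_eq_zero.mp τ.2.2
      rw [hτ] at h2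
      have h2' : gen v ⊂ m := by
        have h2'' : (insert v (∅ : Finset (Fin Γ.card))).sup gen ⊂ m := h2
        rwa [show insert v (∅ : Finset (Fin Γ.card)) = {v} from rfl,
          Finset.sup_singleton] at h2''
      have hvnL : gen v ∉ L := by
        intro hmem
        have hvσ0 : v ∈ σ0 := (hmemσ0 v).mpr hmem
        rw [hv0, Finset.mem_singleton] at hvσ0
        subst hvσ0
        exact h2'.ne hgv0m
      rcases hwo' v h2'.subset hvnL with ⟨i, hi, -⟩
      omega
    rw [hbd0, LinearMap.range_zero, finrank_bot, Module.finrank_pi k, hcard1]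
    omega
  · -- length = Kk + 2
    have hK2 : L.length = Kk + 2 := hlen
    have hcard0' : σ0.card = (Kk + 1) + 1 := by rw [hcard0, hK2]
    have hface0 : ∀ v ∈ σ0, P (σ0.erase v) := fun v hv =>
      hproper _ (Finset.erase_subset _ _) (Finset.erase_ssubset hv).ne
    set P' : Finset (Fin Γ.card) → Prop := fun X => P X ∨ X ⊆ σ0 with hP'def
    have hP'down : ∀ ⦃A B : Finset (Fin Γ.card)⦄, A ⊆ B → P' B → P' A := by
      intro A B hAB hB
      rcases hB with hB | hB
      · exact Or.inl (hPdown hAB hB)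
      · exact Or.inr (hAB.trans hB)
    set e0 : TaylorChain k Γ.card P' (Kk + 2) := fun x => if x.1 = σ0 then 1 else 0 with he0
    set z : TaylorChain k Γ.card P (Kk + 1) :=
      fun σ => taylorBd k Γ.card P' (Kk + 1) e0 ⟨σ.1, Or.inl σ.2.1, σ.2.2⟩ with hzdef
    have hz : taylorBd k Γ.card P Kk z = 0 := by
      have h0 := taylorBd_comp k P' hP'down Kk e0
      funext υ
      have h1 := congrFun h0 ⟨υ.1, Or.inl υ.2.1, υ.2.2⟩
      simp only [Pi.zero_apply] at h1
      rw [Pi.zero_apply, ← h1]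
      show taylorBd k Γ.card P Kk z υ
        = taylorBd k Γ.card P' Kk (taylorBd k Γ.card P' (Kk + 1) e0)
          ⟨υ.1, Or.inl υ.2.1, υ.2.2⟩
      rw [taylorBd_apply, taylorBd_apply]
      refine Finset.sum_congr rfl fun v _ => ?_
      by_cases hc : v ∉ υ.1 ∧ P (insert v υ.1)
      · rw [dif_pos hc, dif_pos (⟨hc.1, Or.inl hc.2⟩ : v ∉ υ.1 ∧ P' (insert v υ.1))]
      · have hc' : ¬(v ∉ υ.1 ∧ P' (insert v υ.1)) := by
          rintro ⟨h1', h2'⟩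
          rcases h2' with hp | hs0
          · exact hc ⟨h1', hp⟩
          · refine hc ⟨h1', hproper _ hs0 ?_⟩
            intro heq
            have hci : (insert v υ.1).card = Kk + 1 := by
              rw [Finset.card_insert_of_notMem h1', υ.2.2]
            rw [heq, hcard0, hK2] at hci
            omega
        rw [dif_neg hc, dif_neg hc']
    have hzval : ∀ σ : {σ : Finset (Fin Γ.card) // P σ ∧ σ.card = Kk + 1},
        z σ = ∑ v : Fin Γ.card, if v ∉ σ.1 ∧ insert v σ.1 = σ0 then
          (-1 : k) ^ ((σ.1.filter (· < v)).card) else 0 := by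
      intro σ
      show taylorBd k Γ.card P' (Kk + 1) e0 ⟨σ.1, Or.inl σ.2.1, σ.2.2⟩ = _
      rw [taylorBd_apply]
      refine Finset.sum_congr rfl fun v _ => ?_
      by_cases hc : v ∉ σ.1 ∧ insert v σ.1 = σ0
      · rw [dif_pos (⟨hc.1, Or.inr (le_of_eq hc.2)⟩ : v ∉ σ.1 ∧ P' (insert v σ.1))]
        simp only [he0]
        rw [if_pos hc.2, mul_one, if_pos hc]
      · rw [if_neg hc]
        by_cases hg : v ∉ σ.1 ∧ P' (insert v σ.1)
        · rw [dif_pos hg]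
          simp only [he0]
          rw [if_neg (fun h => hc ⟨hg.1, h⟩), mul_zero]
        · rw [dif_neg hg]
    have hsubσ0 : ∀ v ∈ σ0, gen v ⊆ m := fun v hv => hFsubm _ ((hmemσ0 v).mp hv)
    have hinj0 : Function.Injective
        fun c : Fin ((Kk + 1) + 1) => ρ (σ0.orderEmbOfFin hcard0' c) := by
      intro c c' h
      exact (σ0.orderEmbOfFin hcard0').injective
        (hinjσ0 _ (Finset.orderEmbOfFin_mem σ0 hcard0' c) _
          (Finset.orderEmbOfFin_mem σ0 hcard0' c') h)
    have hrange0 : ∀ c : Fin ((Kk + 1) + 1), 1 ≤ ρ (σ0.orderEmbOfFin hcard0' c) ∧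
        ρ (σ0.orderEmbOfFin hcard0' c) ≤ (Kk + 1) + 1 := by
      intro c
      have := hrange _ (hsubσ0 _ (Finset.orderEmbOfFin_mem σ0 hcard0' c))
      omega
    have hznz : myNu k P ρ (Kk + 1) z ≠ 0 := by
      rw [show z = (fun σ : {σ : Finset (Fin Γ.card) // P σ ∧ σ.card = Kk + 1} =>
          ∑ v : Fin Γ.card, if v ∉ σ.1 ∧ insert v σ.1 = σ0 then
            (-1 : k) ^ (σ.1.filter (· < v)).card else 0) from funext hzval]
      rw [myPinNu k P ρ (Kk + 1) σ0 hcard0' hface0]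
      exact myDetNe k ρ (Kk + 1) σ0 hcard0' hinj0 hrange0
    have hdet0 : ∀ τ : {σ : Finset (Fin Γ.card) // P σ ∧ σ.card = (Kk + 1) + 1},
        (myN k ρ (Kk + 1) τ.1 τ.2.2).det = 0 := by
      intro τ
      exact myKeyDet k gen m L ρ (Kk + 1) hK2 hstep hrange hcovm τ.1 τ.2.2
        ((hPsup τ.1 τ.2.1).1) ((hPsup τ.1 τ.2.1).2)
    have hker : ∀ f : TaylorChain k Γ.card P ((Kk + 1) + 1),
        myNu k P ρ (Kk + 1) (taylorBd k Γ.card P (Kk + 1) f) = 0 :=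
      myNuBd k P hPdown ρ (Kk + 1) hdet0
    simp only [bettiOfTaylor]
    apply Nat.sub_ne_zero_of_lt
    haveI : FiniteDimensional k (TaylorChain k Γ.card P (Kk + 1)) := by infer_instance
    have hrangeker : LinearMap.range (taylorBd k Γ.card P (Kk + 1))
        ⊔ Submodule.span k {z} ≤ LinearMap.ker (taylorBd k Γ.card P Kk) := by
      apply sup_le
      · rintro x ⟨f, rfl⟩
        exact LinearMap.mem_ker.mpr (taylorBd_comp k P hPdown Kk f)
      · rw [Submodule.span_le, Set.singleton_subset_iff]
        exact LinearMap.mem_ker.mpr hz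
    have hznotin : z ∉ LinearMap.range (taylorBd k Γ.card P (Kk + 1)) := by
      rintro ⟨f, hf⟩
      apply hznz
      have hkf := hker f
      rw [hf] at hkf
      exact hkf
    have hlt : LinearMap.range (taylorBd k Γ.card P (Kk + 1))
        < LinearMap.range (taylorBd k Γ.card P (Kk + 1)) ⊔ Submodule.span k {z} := by
      refine lt_of_le_of_ne le_sup_left ?_
      intro hEq
      apply hznotin
      rw [hEq]
      exact Submodule.mem_sup_right (Submodule.mem_span_singleton_self z)
    calc Module.finrank k (LinearMap.range (taylorBd k Γ.card P (Kk + 1)))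
        < Module.finrank k
            ↥(LinearMap.range (taylorBd k Γ.card P (Kk + 1)) ⊔ Submodule.span k {z}) :=
          Submodule.finrank_lt_finrank_of_lt hlt
      _ ≤ Module.finrank k (LinearMap.ker (taylorBd k Γ.card P Kk)) :=
          Submodule.finrank_mono hrangeker
end

section
/- Let Γ be a simplicial complex with connected components Υ_1, ..., Υ_k. If each Υ_t has a well ordered facet cover of cardinality u_t, then Γ has a well ordered facet cover of cardinality u_1 + ... + u_k, obtained by concatenating the covers of the components. -/
open Classical

variable {α : Type*} [DecidableEq α]

/-- A subcollection is connected if any two of its facets are joined by a chain of facets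
with consecutive nonempty intersections. -/
def IsConnectedCollection (Δ : Finset (Finset α)) : Prop :=
  ∀ F ∈ Δ, ∀ G ∈ Δ,
    Relation.ReflTransGen (fun A B => A ∈ Δ ∧ B ∈ Δ ∧ (A ∩ B).Nonempty) F G

lemma mem_vertexSet {Δ : Finset (Finset α)} {v : α} :
    v ∈ vertexSet Δ ↔ ∃ F ∈ Δ, v ∈ F := Finset.mem_sup

lemma flatten_lift (H : Finset α) (LL : List (List (Finset α)))
    (l : List (Finset α)) (hl : l ∈ LL) (i : ℕ) (hi : i + 1 < l.length)
    (hsubs : l.get ⟨i, Nat.lt_of_succ_lt hi⟩ ⊆ H ∪ listUnion (l.drop (i+1))) :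
    ∃ j, ∃ h' : j + 1 < LL.flatten.length,
      LL.flatten.get ⟨j, Nat.lt_of_succ_lt h'⟩ ⊆ H ∪ listUnion (LL.flatten.drop (j+1)) := by
  induction LL with
  | nil => simp at hl
  | cons hd tl ih =>
      rcases List.mem_cons.mp hl with h | h
      · subst h
        have hlen : i + 1 < (l :: tl).flatten.length := by
          rw [List.flatten_cons, List.length_append]; omega
        refine ⟨i, hlen, ?_⟩
        simp only [List.get_eq_getElem, List.flatten_cons]
        rw [List.getElem_append_left (Nat.lt_of_succ_lt hi),
          List.drop_append_of_le_length hi.le, listUnion_append]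
        intro x hx
        have := hsubs hx
        rw [Finset.mem_union] at this ⊢
        rcases this with h | h
        · exact Or.inl h
        · exact Or.inr (Finset.mem_union_left _ h)
      · obtain ⟨j, hj, hsub⟩ := ih h
        have hlen : hd.length + j + 1 < (hd :: tl).flatten.length := by
          rw [List.flatten_cons, List.length_append]; omega
        refine ⟨hd.length + j, hlen, ?_⟩
        simp only [List.get_eq_getElem, List.flatten_cons]
        rw [List.getElem_append_right (Nat.le_add_right hd.length j),
          Nat.add_assoc, List.drop_append]
        have hdrop : List.drop (hd.length + (j + 1)) hd = [] := List.drop_eq_nil_of_le (by omega)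
        simpa [hdrop] using hsub

/-- If `Υ 0, ..., Υ (q-1)` are the connected components of the simplicial complex `Γ`
(connected subcollections, partitioning the facets, with pairwise disjoint vertex sets)
and each `Υ t` has a well ordered facet cover `L t` (of cardinality `u t`), then the
concatenation of the `L t` is a well ordered facet cover of `Γ` (of cardinality
`u 0 + ⋯ + u (q-1)`). -/
theorem components_concat_wellOrderedFacetCover (Γ : Finset (Finset α))
    (hfacets : ∀ F ∈ Γ, ∀ G ∈ Γ, F ⊆ G → F = G)
    (hne : ∀ F ∈ Γ, F.Nonempty)
    (q : ℕ) (Υ : Fin q → Finset (Finset α))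
    (hsub : ∀ t, Υ t ⊆ Γ)
    (hconn : ∀ t, IsConnectedCollection (Υ t))
    (hpart : ∀ H ∈ Γ, ∃! t, H ∈ Υ t)
    (hdisj : ∀ t t', t ≠ t' → Disjoint (vertexSet (Υ t)) (vertexSet (Υ t')))
    (L : Fin q → List (Finset α))
    (hL : ∀ t, IsWellOrderedFacetCover (vertexSet (Υ t)) (Υ t) (L t)) :
    IsWellOrderedFacetCover (vertexSet Γ) Γ (List.ofFn L).flatten ∧
      (List.ofFn L).flatten.length = ∑ t, (L t).length := by
  set FL := (List.ofFn L).flatten with hFL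
  have helem : ∀ t, ∀ F ∈ L t, F ∈ Υ t := fun t => (hL t).2.1
  have hmemFL : ∀ F, F ∈ FL ↔ ∃ t, F ∈ L t := by
    intro F
    rw [hFL, List.mem_flatten]
    constructor
    · rintro ⟨l, hl, hF⟩
      obtain ⟨t, rfl⟩ := List.mem_ofFn.mp hl
      exact ⟨t, hF⟩
    · rintro ⟨t, hF⟩
      exact ⟨L t, List.mem_ofFn.mpr ⟨t, rfl⟩, hF⟩
  have huniq : ∀ {t t' : Fin q} {F}, F ∈ Υ t → F ∈ Υ t' → t = t' := by
    intro t t' F h1 h2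
    obtain ⟨s, _, hs⟩ := hpart F (hsub t h1)
    rw [hs t h1, hs t' h2]
  have hFLΓ : ∀ F ∈ FL, F ∈ Γ := by
    intro F hF
    obtain ⟨t, hFt⟩ := (hmemFL F).mp hF
    exact hsub t (helem t F hFt)
  have hvertΓ : ∀ t, vertexSet (Υ t) ⊆ vertexSet Γ :=
    fun t => Finset.le_iff_subset.mp (Finset.sup_mono (hsub t))
  have hvmem : ∀ {t : Fin q} {F v}, F ∈ Υ t → v ∈ F → v ∈ vertexSet (Υ t) :=
    fun hF hv => mem_vertexSet.mpr ⟨_, hF, hv⟩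
  refine ⟨⟨?_, hFLΓ, ⟨⟨?_, ?_⟩, ?_⟩, ?_⟩, ?_⟩
  · -- Nodup
    rw [hFL, List.nodup_flatten]
    constructor
    · intro l hl
      obtain ⟨t, rfl⟩ := List.mem_ofFn.mp hl
      exact (hL t).1
    · rw [List.pairwise_ofFn]
      intro i j hij F hFi hFj
      exact absurd (huniq (helem i F hFi) (helem j F hFj)) hij.ne
  · -- cover subset
    intro F hF
    exact hFLΓ F (List.mem_toFinset.mp hF)
  · -- covers vertices
    intro v hv
    obtain ⟨F, hFΓ, hvF⟩ := mem_vertexSet.mp hv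
    obtain ⟨t, hFt, _⟩ := hpart F hFΓ
    obtain ⟨F', hF', hvF'⟩ := ((hL t).2.2.1).1.2 v (hvmem hFt hvF)
    exact ⟨F', List.mem_toFinset.mpr ((hmemFL F').mpr
      ⟨t, List.mem_toFinset.mp hF'⟩), hvF'⟩
  · -- minimality
    rintro D' hD' ⟨hD'Γ, hD'cov⟩
    obtain ⟨F₀, hF₀FL, hF₀D'⟩ := Finset.exists_of_ssubset hD'
    obtain ⟨t₀, hF₀t₀⟩ := (hmemFL F₀).mp (List.mem_toFinset.mp hF₀FL)
    set D'' := D' ∩ (L t₀).toFinset with hD''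
    have hss : D'' ⊂ (L t₀).toFinset := by
      refine Finset.ssubset_iff_of_subset Finset.inter_subset_right |>.mpr
        ⟨F₀, List.mem_toFinset.mpr hF₀t₀, fun h => hF₀D' (Finset.mem_inter.mp h).1⟩
    refine ((hL t₀).2.2.1).2 D'' hss ⟨?_, ?_⟩
    · intro F hF
      exact helem t₀ F (List.mem_toFinset.mp (Finset.mem_inter.mp hF).2)
    · intro v hv
      obtain ⟨F, hFD', hvF⟩ := hD'cov v (hvertΓ t₀ hv)
      obtain ⟨t', hFt'⟩ := (hmemFL F).mp (List.mem_toFinset.mp (hD'.subset hFD'))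
      have ht' : t' = t₀ := by
        by_contra hne'
        exact Finset.notMem_empty v (Finset.le_iff_subset.mp (hdisj t' t₀ hne').le_bot
          (Finset.mem_inter.mpr ⟨hvmem (helem t' F hFt') hvF, hv⟩))
      exact ⟨F, Finset.mem_inter.mpr ⟨hFD',
        List.mem_toFinset.mpr (ht' ▸ hFt')⟩, hvF⟩
  · -- well-ordered condition
    intro H hHΓ hHFL
    obtain ⟨t, hHt, _⟩ := hpart H hHΓ
    have hHLt : H ∉ L t := fun h => hHFL ((hmemFL H).mpr ⟨t, h⟩)
    obtain ⟨i, hi, hsubs⟩ := (hL t).2.2.2 H hHt hHLt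
    exact flatten_lift H (List.ofFn L) (L t)
      (List.mem_ofFn.mpr ⟨t, rfl⟩) i hi hsubs
  · -- length
    simp [hFL, List.length_flatten, List.map_ofFn, Function.comp, List.sum_ofFn]
end

section
/- Let Γ be a simplicial complex, < a total order on its facets, and S a nonempty set of facets such that for every nonempty subset T ⊆ S, the union of facets omitting any one element of T is strictly smaller than the union over T. Then for every nonempty T ⊆ S, the <-smallest facet of Γ contained in ∪_{F∈T} F that belongs to S is the <-smallest element of T, provided the elements of S are ordered before all other facets; in particular S is rooted, i.e., a face of the Lyubeznik complex Λ_{F(Γ),<}. -/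
open Classical

variable {α : Type*} [DecidableEq α]

/-- Let `Γ` be a simplicial complex, `<` a total order on its facets (encoded by an
injective weight function `w`), and `S` a nonempty set of facets such that for every
nonempty `T ⊆ S` omitting any one element of `T` strictly decreases the union.  If the
elements of `S` come before all the other facets in the order, then for every nonempty
`T ⊆ S` the `<`-smallest facet of `Γ` contained in `⋃_{F ∈ T} F` is the `<`-smallest
element of `T`; in particular `S` is rooted, i.e. a face of the Lyubeznik complex. -/
theorem minimal_unions_give_rooted (Γ : Finset (Finset α))
    (hfacets : ∀ F ∈ Γ, ∀ G ∈ Γ, F ⊆ G → F = G)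
    (S : Finset (Finset α)) (hSΓ : S ⊆ Γ) (hSne : S.Nonempty)
    (hstrict : ∀ T ⊆ S, T.Nonempty → ∀ F ∈ T, (T.erase F).sup id ⊂ T.sup id)
    (w : Finset α → ℕ) (hinj : Set.InjOn w Γ)
    (hfirst : ∀ F ∈ S, ∀ H ∈ Γ, H ∉ S → w F < w H) :
    (∀ T ⊆ S, T.Nonempty → ∃ G₀ ∈ T, (∀ H ∈ T, w G₀ ≤ w H) ∧
      ∀ G ∈ Γ, G ⊆ T.sup id → w G₀ ≤ w G) ∧
    Rooted w Γ S := by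
  have key : ∀ T ⊆ S, T.Nonempty → ∃ G₀ ∈ T, (∀ H ∈ T, w G₀ ≤ w H) ∧
      ∀ G ∈ Γ, G ⊆ T.sup id → w G₀ ≤ w G := by
    intro T hTS hTne
    obtain ⟨G₀, hG₀T, hmin⟩ := T.exists_min_image w hTne
    refine ⟨G₀, hG₀T, hmin, ?_⟩
    intro G hGΓ hGsub
    by_contra hlt
    push_neg at hlt
    have hGS : G ∈ S := by
      by_contra hGS
      exact absurd (hfirst G₀ (hTS hG₀T) G hGΓ hGS) (not_lt.2 hlt.le)
    have hGT : G ∉ T := fun h => absurd (hmin G h) (not_le.2 hlt)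
    have hT' : insert G T ⊆ S := Finset.insert_subset hGS hTS
    have hsup : (insert G T).sup id = T.sup id := by
      rw [Finset.sup_insert]
      exact sup_eq_right.mpr hGsub
    have := hstrict (insert G T) hT' ⟨G, Finset.mem_insert_self G T⟩
      G (Finset.mem_insert_self G T)
    rw [Finset.erase_insert hGT, hsup] at this
    exact ssubset_irrefl _ this
  refine ⟨key, ?_⟩
  intro T hTS hTne
  obtain ⟨G₀, hG₀T, _, h2⟩ := key T hTS hTne
  exact ⟨G₀, hG₀T, h2⟩
end
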